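/- arXiv:1907.01995 — 3 statements merged into one kernel-verified Lean document; each statement's English description precedes it below -/
import Mathlib

section
/- Suppose Assumption 1 holds. Let (σ_k)_{k≥0} be independent and uniformly distributed on Γ, let z^0 ∈ ℝ^{n+m} be deterministic, and define the RAC-MBADMM iterates by z^{k+1} = M_{σ_k} z^k + L̄_{σ_k}^{-1} b̄. If the spectral radius of |Γ|^{-1} Σ_{σ∈Γ} (M_σ ⊗ M_σ), where ⊗ denotes the Kronecker product of matrices, is strictly less than 1, then the iterates z^k converge almost surely to a KKT point (x*, y*) of the linearly constrained quadratic problem, i.e., Hx* + c − Aᵀy* = 0 and Ax* = b. -/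
open Matrix Filter Topology MeasureTheory ProbabilityTheory Kronecker

namespace RAC

noncomputable section

/-- `S = H + β AᵀA`. -/
def Smat {n m : ℕ} (H : Matrix (Fin n) (Fin n) ℝ) (A : Matrix (Fin m) (Fin n) ℝ)
    (β : ℝ) : Matrix (Fin n) (Fin n) ℝ :=
  H + β • (Aᵀ * A)

/-- An update order, encoded by assigning to each variable index its block;
all `p` fibers (blocks) have size `s`. -/
def IsUpdateOrder (n p s : ℕ) (σ : Fin n → Fin p) : Prop :=
  ∀ i : Fin p, (Finset.univ.filter fun a => σ a = i).card = s

instance (n p s : ℕ) : DecidablePred (IsUpdateOrder n p s) := fun _ => by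
  unfold IsUpdateOrder; infer_instance

/-- The set `Γ` of all update orders. -/
abbrev UpdateOrder (n p s : ℕ) := {σ : Fin n → Fin p // IsUpdateOrder n p s σ}

/-- The block lower-triangular matrix `L_σ`. -/
def Lmat {n m p : ℕ} (H : Matrix (Fin n) (Fin n) ℝ) (A : Matrix (Fin m) (Fin n) ℝ)
    (β : ℝ) (σ : Fin n → Fin p) : Matrix (Fin n) (Fin n) ℝ :=
  Matrix.of fun a b => if σ b ≤ σ a then Smat H A β a b else 0

/-- Assumption 1: every size-`s` principal submatrix of `H + β AᵀA` is positive definite. -/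
def Assumption1 {n m : ℕ} (H : Matrix (Fin n) (Fin n) ℝ) (A : Matrix (Fin m) (Fin n) ℝ)
    (β : ℝ) (s : ℕ) : Prop :=
  ∀ τ : Finset (Fin n), τ.card = s →
    ((Smat H A β).submatrix (fun x : τ => (x : Fin n)) (fun x : τ => (x : Fin n))).PosDef

/-- `L̄_σ = [[L_σ, 0], [βA, I]]`. -/
def Lbar {n m p : ℕ} (H : Matrix (Fin n) (Fin n) ℝ) (A : Matrix (Fin m) (Fin n) ℝ)
    (β : ℝ) (σ : Fin n → Fin p) : Matrix (Fin n ⊕ Fin m) (Fin n ⊕ Fin m) ℝ :=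
  Matrix.fromBlocks (Lmat H A β σ) 0 (β • A) 1

/-- `R̄_σ = [[L_σ − S, Aᵀ], [0, I]]`. -/
def Rbar {n m p : ℕ} (H : Matrix (Fin n) (Fin n) ℝ) (A : Matrix (Fin m) (Fin n) ℝ)
    (β : ℝ) (σ : Fin n → Fin p) : Matrix (Fin n ⊕ Fin m) (Fin n ⊕ Fin m) ℝ :=
  Matrix.fromBlocks (Lmat H A β σ - Smat H A β) Aᵀ 0 1

/-- `b̄ = (−c + β Aᵀb ; β b)`. -/
def bbar {n m : ℕ} (c : Fin n → ℝ) (A : Matrix (Fin m) (Fin n) ℝ) (b : Fin m → ℝ)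
    (β : ℝ) : Fin n ⊕ Fin m → ℝ :=
  Sum.elim (-c + β • (Aᵀ *ᵥ b)) (β • b)

/-- The per-iteration mapping matrix `M_σ = L̄_σ⁻¹ R̄_σ`. -/
def Mmat {n m p : ℕ} (H : Matrix (Fin n) (Fin n) ℝ) (A : Matrix (Fin m) (Fin n) ℝ)
    (β : ℝ) (σ : Fin n → Fin p) : Matrix (Fin n ⊕ Fin m) (Fin n ⊕ Fin m) ℝ :=
  (Lbar H A β σ)⁻¹ * Rbar H A β σ

/-- `Q = |Γ|⁻¹ Σ_{σ∈Γ} L_σ⁻¹`. -/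
def Qmat (n m p s : ℕ) (H : Matrix (Fin n) (Fin n) ℝ) (A : Matrix (Fin m) (Fin n) ℝ)
    (β : ℝ) : Matrix (Fin n) (Fin n) ℝ :=
  (Fintype.card (UpdateOrder n p s) : ℝ)⁻¹ •
    ∑ σ : UpdateOrder n p s, (Lmat H A β σ.1)⁻¹

/-- The expected mapping matrix `M`. -/
def Mexp (n m p s : ℕ) (H : Matrix (Fin n) (Fin n) ℝ) (A : Matrix (Fin m) (Fin n) ℝ)
    (β : ℝ) : Matrix (Fin n ⊕ Fin m) (Fin n ⊕ Fin m) ℝ :=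
  Matrix.fromBlocks (1 - Qmat n m p s H A β * Smat H A β) (Qmat n m p s H A β * Aᵀ)
    (-(β • A) + β • (A * (Qmat n m p s H A β * Smat H A β)))
    (1 - β • (A * (Qmat n m p s H A β * Aᵀ)))

/-- KKT point of `min ½xᵀHx + cᵀx  s.t.  Ax = b`. -/
def IsKKT {n m : ℕ} (H : Matrix (Fin n) (Fin n) ℝ) (c : Fin n → ℝ)
    (A : Matrix (Fin m) (Fin n) ℝ) (b : Fin m → ℝ) (x : Fin n → ℝ) (y : Fin m → ℝ) :
    Prop :=
  H *ᵥ x + c - Aᵀ *ᵥ y = 0 ∧ A *ᵥ x = b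

/-- `μ` is an eigenvalue of the complex matrix `M`. -/
def HasEigen {ι : Type*} [Fintype ι] (M : Matrix ι ι ℂ) (μ : ℂ) : Prop :=
  ∃ v : ι → ℂ, v ≠ 0 ∧ M *ᵥ v = μ • v

/-- `μ` is a (real) eigenvalue of the real matrix `M`. -/
def HasEigenR {ι : Type*} [Fintype ι] (M : Matrix ι ι ℝ) (μ : ℝ) : Prop :=
  ∃ v : ι → ℝ, v ≠ 0 ∧ M *ᵥ v = μ • v

end

end RAC

open RAC Matrix Filter Topology MeasureTheory ProbabilityTheory Kronecker
open scoped ENNReal NNReal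

namespace RACproof

open RAC Matrix Filter Topology MeasureTheory ProbabilityTheory Kronecker
open scoped ENNReal NNReal

attribute [local instance] Matrix.linftyOpNormedRing Matrix.linftyOpNormedAlgebra

noncomputable section

variable {ι : Type*} [Fintype ι]

lemma kron_mulVec {R : Type*} [CommRing R] (A B : Matrix ι ι R) (u v : ι → R) :
    (A ⊗ₖ B) *ᵥ (fun q : ι × ι => u q.1 * v q.2) =
      fun q : ι × ι => (A *ᵥ u) q.1 * (B *ᵥ v) q.2 := by
  funext q
  simp only [mulVec, dotProduct, kroneckerMap_apply, Fintype.sum_prod_type]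
  rw [Finset.sum_mul_sum]
  apply Finset.sum_congr rfl; intro a _
  apply Finset.sum_congr rfl; intro b _
  ring

lemma mulVec_sumv {R : Type*} [CommRing R] {κ : Type*} (s : Finset κ)
    (A : Matrix ι ι R) (v : κ → ι → R) :
    A *ᵥ (∑ x ∈ s, v x) = ∑ x ∈ s, A *ᵥ v x := by
  funext i
  simp only [mulVec, dotProduct, Finset.sum_apply, Finset.mul_sum]
  rw [Finset.sum_comm]

lemma sumM_mulVec {R : Type*} [CommRing R] {κ : Type*} (s : Finset κ)
    (A : κ → Matrix ι ι R) (v : ι → R) :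
    (∑ x ∈ s, A x) *ᵥ v = ∑ x ∈ s, A x *ᵥ v := by
  funext i
  simp only [mulVec, dotProduct, Matrix.sum_apply, Finset.sum_apply, Finset.sum_mul]
  rw [Finset.sum_comm]

lemma eigen_of_mem_spectrum [DecidableEq ι]
    (T : Matrix ι ι ℂ) {lam : ℂ} (h : lam ∈ spectrum ℂ T) :
    ∃ v : ι → ℂ, v ≠ 0 ∧ T *ᵥ v = lam • v := by
  rw [spectrum.mem_iff] at h
  have hdet : (lam • (1 : Matrix ι ι ℂ) - T).det = 0 := by
    by_contra hd
    exact h (by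
      rw [Algebra.algebraMap_eq_smul_one]
      exact (Matrix.isUnit_iff_isUnit_det _).2 (isUnit_iff_ne_zero.2 hd))
  obtain ⟨v, hv0, hv⟩ := (Matrix.exists_mulVec_eq_zero_iff).2 hdet
  refine ⟨v, hv0, ?_⟩
  rw [Matrix.sub_mulVec, Matrix.smul_mulVec, Matrix.one_mulVec] at hv
  exact (sub_eq_zero.mp hv).symm

lemma geom_bound [DecidableEq ι] (T : Matrix ι ι ℂ)
    (h : ∀ lam : ℂ, (∃ v : ι → ℂ, v ≠ 0 ∧ T *ᵥ v = lam • v) → ‖lam‖ < 1) :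
    ∃ u : ℕ → ℝ, (∀ k, 0 ≤ u k) ∧ Summable u ∧
      ∀ (k : ℕ) (v : ι → ℂ) (i : ι), ‖(T ^ k *ᵥ v) i‖ ≤ u k * ‖v‖ := by
  have hfin := T.finite_spectrum
  have hρ : spectralRadius ℂ T < 1 := by
    set r0 : ℝ≥0 := hfin.toFinset.sup (fun lam => ‖lam‖₊) with hr0
    have hsup : r0 < 1 := by
      rw [hr0]
      rw [Finset.sup_lt_iff (show (⊥ : ℝ≥0) < 1 by norm_num)]
      intro lam hlam
      have h1 : ‖lam‖ < 1 :=
        h lam (eigen_of_mem_spectrum T (hfin.mem_toFinset.mp hlam))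
      simpa [← NNReal.coe_lt_coe] using h1
    have hle : spectralRadius ℂ T ≤ (r0 : ℝ≥0∞) := by
      rw [spectralRadius]
      exact iSup₂_le fun lam hlam =>
        ENNReal.coe_le_coe.2 (hr0 ▸ Finset.le_sup (hfin.mem_toFinset.mpr hlam))
    exact hle.trans_lt (ENNReal.coe_lt_one_iff.2 hsup)
  obtain ⟨r, hr1, hr2⟩ := exists_between hρ
  have hrtop : r ≠ ⊤ := (hr2.trans_le le_top).ne_top
  have hgel := spectrum.pow_nnnorm_pow_one_div_tendsto_nhds_spectralRadius T
  obtain ⟨K, hK⟩ :=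
    ((hgel.eventually_lt_const hr1).and (eventually_ge_atTop 1)).exists_forall_of_atTop
  set rr : ℝ≥0 := r.toNNReal with hrr
  have hrcoe : (rr : ℝ≥0∞) = r := ENNReal.coe_toNNReal hrtop
  have hrr1 : rr < 1 := by
    rw [← ENNReal.coe_lt_one_iff, hrcoe]; exact hr2
  have hbound : ∀ k, K ≤ k → ‖T ^ k‖₊ ≤ rr ^ k := by
    intro k hk
    obtain ⟨h1, h2⟩ := hK k hk
    have hkne : (k : ℝ) ≠ 0 := Nat.cast_ne_zero.2 (by omega)
    have hx : ((‖T ^ k‖₊ : ℝ≥0∞) ^ (1 / (k : ℝ))) ^ (k : ℝ) ≤ r ^ (k : ℝ) :=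
      ENNReal.rpow_le_rpow h1.le (Nat.cast_nonneg k)
    rw [← ENNReal.rpow_mul, one_div_mul_cancel hkne, ENNReal.rpow_one] at hx
    rw [← hrcoe, ENNReal.rpow_natCast, ← ENNReal.coe_pow, ENNReal.coe_le_coe] at hx
    exact hx
  refine ⟨fun k => max ‖T ^ k‖ ((rr : ℝ) ^ k), fun k => le_max_of_le_left (norm_nonneg _),
    ?_, ?_⟩
  · rw [← summable_nat_add_iff K]
    have heq : ∀ k : ℕ, max ‖T ^ (k + K)‖ ((rr : ℝ) ^ (k + K)) = (rr : ℝ) ^ (k + K) := by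
      intro k
      refine max_eq_right ?_
      have h2 : (‖T ^ (k + K)‖₊ : ℝ) ≤ ((rr ^ (k + K) : ℝ≥0) : ℝ) := by
        exact_mod_cast hbound (k + K) (by omega)
      simpa using h2
    simp_rw [heq, pow_add]
    exact (summable_geometric_of_lt_one rr.coe_nonneg (by exact_mod_cast hrr1)).mul_right _
  · intro k v i
    calc ‖(T ^ k *ᵥ v) i‖ ≤ ‖T ^ k *ᵥ v‖ := norm_le_pi_norm _ i
      _ ≤ ‖T ^ k‖ * ‖v‖ := Matrix.linfty_opNorm_mulVec _ _
      _ ≤ max ‖T ^ k‖ ((rr : ℝ) ^ k) * ‖v‖ :=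
          mul_le_mul_of_nonneg_right (le_max_left _ _) (norm_nonneg _)

end

/-- Kernel triviality for `Lmat` under Assumption 1. -/
lemma Lmat_ker {n mm p s : ℕ} {H : Matrix (Fin n) (Fin n) ℝ}
    {A : Matrix (Fin mm) (Fin n) ℝ} {β : ℝ}
    (hA1 : Assumption1 H A β s) {σ : Fin n → Fin p} (hσ : IsUpdateOrder n p s σ)
    {v : Fin n → ℝ} (hv : Lmat H A β σ *ᵥ v = 0) : v = 0 := by
  classical
  have key : ∀ N : ℕ, ∀ a : Fin n, (σ a : ℕ) < N → v a = 0 := by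
    intro N
    induction N with
    | zero => intro a ha; omega
    | succ N ih =>
      intro a ha
      rcases lt_or_ge ((σ a : ℕ)) N with hlt | hge
      · exact ih a hlt
      have haN : (σ a : ℕ) = N := by omega
      set τ : Finset (Fin n) := Finset.univ.filter (fun b => σ b = σ a) with hτ
      have hPD := hA1 τ (hσ (σ a))
      have hrow : ∀ a' : Fin n, σ a' = σ a →
          ∑ b ∈ τ, Smat H A β a' b * v b = 0 := by
        intro a' ha'
        have h0 := congrFun hv a'
        simp only [mulVec, dotProduct, Pi.zero_apply, Lmat, Matrix.of_apply] at h0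
        have hA : ∑ b ∈ τ, (if σ b ≤ σ a' then Smat H A β a' b else 0) * v b
            = ∑ b, (if σ b ≤ σ a' then Smat H A β a' b else 0) * v b := by
          refine Finset.sum_subset (Finset.subset_univ τ) ?_
          intro b _ hb
          rw [hτ, Finset.mem_filter] at hb
          push_neg at hb
          have hbne : σ b ≠ σ a := hb (Finset.mem_univ b)
          by_cases hble : σ b ≤ σ a'
          · have hN : (σ b : ℕ) < N := by
              have h1 : (σ b : ℕ) ≤ (σ a' : ℕ) := hble
              have h2 : (σ a' : ℕ) = N := by rw [ha']; exact haN
              have h3 : (σ b : ℕ) ≠ (σ a : ℕ) := fun hc => hbne (Fin.ext hc)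
              omega
            rw [ih b hN, mul_zero]
          · rw [if_neg hble, zero_mul]
        have hB : ∑ b ∈ τ, (if σ b ≤ σ a' then Smat H A β a' b else 0) * v b
            = ∑ b ∈ τ, Smat H A β a' b * v b := by
          refine Finset.sum_congr rfl fun b hb => ?_
          rw [hτ, Finset.mem_filter] at hb
          rw [if_pos (le_of_eq (hb.2.trans ha'.symm))]
        rw [← hB, hA]
        exact h0
      have hsub : (Smat H A β).submatrix (fun x : τ => (x : Fin n))
          (fun x : τ => (x : Fin n)) *ᵥ (fun x : {x // x ∈ τ} => v x.1) = 0 := by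
        funext x
        simp only [mulVec, dotProduct, submatrix_apply, Pi.zero_apply]
        rw [Finset.univ_eq_attach]
        rw [Finset.sum_attach τ (fun b => Smat H A β x.1 b * v b)]
        exact hrow x.1 (Finset.mem_filter.mp x.2).2
      have hw0 : (fun x : {x // x ∈ τ} => v x.1) = 0 := by
        by_contra hwne
        have hdet : ((Smat H A β).submatrix (fun x : τ => (x : Fin n))
            (fun x : τ => (x : Fin n))).det = 0 :=
          Matrix.exists_mulVec_eq_zero_iff.1 ⟨_, hwne, hsub⟩
        exact hPD.det_pos.ne' hdet
      have haτ : a ∈ τ := by rw [hτ]; simp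
      exact congrFun hw0 ⟨a, haτ⟩
  funext a
  simpa using key p a (σ a).isLt

/-- `Lmat` has invertible determinant. -/
lemma Lmat_det_isUnit {n mm p s : ℕ} {H : Matrix (Fin n) (Fin n) ℝ}
    {A : Matrix (Fin mm) (Fin n) ℝ} {β : ℝ}
    (hA1 : Assumption1 H A β s) {σ : Fin n → Fin p} (hσ : IsUpdateOrder n p s σ) :
    IsUnit (Lmat H A β σ).det := by
  rw [isUnit_iff_ne_zero]
  intro hdet
  obtain ⟨v, hv0, hv⟩ := Matrix.exists_mulVec_eq_zero_iff.2 hdet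
  exact hv0 (Lmat_ker hA1 hσ hv)

/-- `Lbar` has invertible determinant. -/
lemma Lbar_det_isUnit {n mm p s : ℕ} {H : Matrix (Fin n) (Fin n) ℝ}
    {A : Matrix (Fin mm) (Fin n) ℝ} {β : ℝ}
    (hA1 : Assumption1 H A β s) {σ : Fin n → Fin p} (hσ : IsUpdateOrder n p s σ) :
    IsUnit (Lbar H A β σ).det := by
  rw [Lbar, Matrix.det_fromBlocks_zero₁₂, Matrix.det_one, mul_one]
  exact Lmat_det_isUnit hA1 hσ

/-- Appending an element to a tuple, as an equivalence. -/
def snocEquiv (Γ : Type*) (k : ℕ) : ((Fin k → Γ) × Γ) ≃ (Fin (k + 1) → Γ) where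
  toFun xx := Fin.snoc xx.1 xx.2
  invFun g := (fun j => g j.castSucc, g (Fin.last k))
  left_inv := by
    rintro ⟨h, a⟩
    refine Prod.ext ?_ ?_
    · funext j; simp
    · simp
  right_inv := by
    intro g; funext j
    induction j using Fin.lastCases with
    | last => simp
    | cast j => simp

lemma snocEquiv_apply {Γ : Type*} {k : ℕ} (xx : (Fin k → Γ) × Γ) :
    snocEquiv Γ k xx = Fin.snoc xx.1 xx.2 := rfl

/-- Ordered products of the iteration matrices along a tuple of update orders. -/
noncomputable def Pprod {n mm p s : ℕ} (H : Matrix (Fin n) (Fin n) ℝ) (A : Matrix (Fin mm) (Fin n) ℝ)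
    (β : ℝ) : ∀ k : ℕ, (Fin k → UpdateOrder n p s) →
      Matrix (Fin n ⊕ Fin mm) (Fin n ⊕ Fin mm) ℝ
  | 0, _ => 1
  | (k + 1), g => Mmat H A β (g (Fin.last k)).1 * Pprod H A β k (fun j => g j.castSucc)

end RACproof

/-- Under Assumption 1, if the spectral radius of
`|Γ|⁻¹ Σ_{σ∈Γ} M_σ ⊗ M_σ` is strictly less than 1 (i.e. every complex eigenvalue has
modulus < 1), then the RAC-MBADMM iterates converge almost surely to a KKT point. -/
theorem almost_sure_convergence_of_RAC_MBADMM
    (n m p s : ℕ) (hp : 0 < p) (hs : 0 < s) (hn : n = p * s)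
    (H : Matrix (Fin n) (Fin n) ℝ) (hH : H.PosSemidef)
    (c : Fin n → ℝ) (A : Matrix (Fin m) (Fin n) ℝ) (b : Fin m → ℝ)
    (β : ℝ) (hβ : 0 < β)
    (hA1 : Assumption1 H A β s)
    (hspec : ∀ lam : ℂ,
      HasEigen
        ((((Fintype.card (UpdateOrder n p s) : ℝ)⁻¹ •
            ∑ σ : UpdateOrder n p s,
              (Mmat H A β σ.1) ⊗ₖ (Mmat H A β σ.1)).map Complex.ofReal)) lam →
      ‖lam‖ < 1)
    (Ω : Type*) [MeasurableSpace Ω] (μ : Measure Ω) [IsProbabilityMeasure μ]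
    (σ : ℕ → Ω → UpdateOrder n p s)
    (hmeas : ∀ k, Measurable (σ k))
    (hindep : iIndepFun σ μ)
    (hunif : ∀ k (g : UpdateOrder n p s),
      μ {ω | σ k ω = g} = (Fintype.card (UpdateOrder n p s) : ℝ≥0∞)⁻¹)
    (z0 : Fin n ⊕ Fin m → ℝ)
    (z : ℕ → Ω → Fin n ⊕ Fin m → ℝ)
    (hz0 : ∀ ω, z 0 ω = z0)
    (hz : ∀ k ω, z (k + 1) ω =
      Mmat H A β (σ k ω).1 *ᵥ z k ω + (Lbar H A β (σ k ω).1)⁻¹ *ᵥ bbar c A b β) :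
    ∃ zstar : Fin n ⊕ Fin m → ℝ,
      IsKKT H c A b (fun i => zstar (Sum.inl i)) (fun j => zstar (Sum.inr j)) ∧
      ∀ᵐ ω ∂μ, Tendsto (fun k => z k ω) atTop (𝓝 zstar) := by
    classical
  -- Γ is nonempty
  have hne : Nonempty (UpdateOrder n p s) := by
    by_contra hcon
    rw [not_nonempty_iff] at hcon
    haveI : IsEmpty Ω := ⟨fun ω => hcon.false (σ 0 ω)⟩
    have h1 : μ Set.univ = 1 := measure_univ
    rw [Set.univ_eq_empty_iff.mpr this, measure_empty] at h1
    exact zero_ne_one h1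
  have hΓpos : 0 < Fintype.card (UpdateOrder n p s) := Fintype.card_pos
  have hΓR : ((Fintype.card (UpdateOrder n p s) : ℝ)) ≠ 0 :=
    (Nat.cast_pos.2 hΓpos).ne'
  set T : Matrix ((Fin n ⊕ Fin m) × (Fin n ⊕ Fin m)) ((Fin n ⊕ Fin m) × (Fin n ⊕ Fin m)) ℝ :=
    (Fintype.card (UpdateOrder n p s) : ℝ)⁻¹ •
      ∑ g : UpdateOrder n p s, (Mmat H A β g.1) ⊗ₖ (Mmat H A β g.1) with hT
  have hLu : ∀ g : UpdateOrder n p s, IsUnit (Lbar H A β g.1).det :=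
    fun g => RACproof.Lbar_det_isUnit hA1 g.2
  set K : Matrix (Fin n ⊕ Fin m) (Fin n ⊕ Fin m) ℝ :=
    Matrix.fromBlocks (Smat H A β) (-Aᵀ) (β • A) 0 with hK
  have hKsub : ∀ g : UpdateOrder n p s, Lbar H A β g.1 - Rbar H A β g.1 = K := by
    intro g
    rw [hK, Lbar, Rbar]
    ext i j
    rcases i with i | i <;> rcases j with j | j <;>
      simp [Matrix.sub_apply, sub_sub_cancel]
  -- K is invertible
  have hKdet : IsUnit K.det := by
    rw [isUnit_iff_ne_zero]
    intro hdet0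
    obtain ⟨v, hv0, hKv⟩ := Matrix.exists_mulVec_eq_zero_iff.2 hdet0
    have hfixv : ∀ g : UpdateOrder n p s, Mmat H A β g.1 *ᵥ v = v := by
      intro g
      have h2 : (Lbar H A β g.1 - Rbar H A β g.1) *ᵥ v = 0 := by rw [hKsub g]; exact hKv
      rw [Matrix.sub_mulVec] at h2
      have h1 : Rbar H A β g.1 *ᵥ v = Lbar H A β g.1 *ᵥ v := (sub_eq_zero.mp h2).symm
      calc Mmat H A β g.1 *ᵥ v = (Lbar H A β g.1)⁻¹ *ᵥ (Rbar H A β g.1 *ᵥ v) := by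
            rw [Mmat, ← Matrix.mulVec_mulVec]
        _ = (Lbar H A β g.1)⁻¹ *ᵥ (Lbar H A β g.1 *ᵥ v) := by rw [h1]
        _ = ((Lbar H A β g.1)⁻¹ * Lbar H A β g.1) *ᵥ v := by rw [Matrix.mulVec_mulVec]
        _ = v := by rw [Matrix.nonsing_inv_mul _ (hLu g), Matrix.one_mulVec]
    have hTw : T *ᵥ (fun q => v q.1 * v q.2) = (fun q => v q.1 * v q.2) := by
      rw [hT, Matrix.smul_mulVec, RACproof.sumM_mulVec]
      have hterm : ∀ g ∈ (Finset.univ : Finset (UpdateOrder n p s)),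
          (Mmat H A β g.1 ⊗ₖ Mmat H A β g.1) *ᵥ (fun q => v q.1 * v q.2)
            = (fun q => v q.1 * v q.2) := by
        intro g _
        rw [RACproof.kron_mulVec, hfixv g]
      rw [Finset.sum_congr rfl hterm, Finset.sum_const, Finset.card_univ]
      rw [← Nat.cast_smul_eq_nsmul ℝ, smul_smul, inv_mul_cancel₀ hΓR, one_smul]
    have hwc0 : (fun q : (Fin n ⊕ Fin m) × (Fin n ⊕ Fin m) =>
        ((v q.1 * v q.2 : ℝ) : ℂ)) ≠ 0 := by
      obtain ⟨q0, hq0⟩ := Function.ne_iff.mp hv0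
      intro hcon
      have h3 := congrFun hcon (q0, q0)
      simp only [Pi.zero_apply, Complex.ofReal_eq_zero, mul_self_eq_zero] at h3
      exact hq0 h3
    have heig : RAC.HasEigen (T.map Complex.ofReal) 1 := by
      refine ⟨fun q => ((v q.1 * v q.2 : ℝ) : ℂ), hwc0, ?_⟩
      funext q
      have hmm : (T.map Complex.ofReal *ᵥ fun q : (Fin n ⊕ Fin m) × (Fin n ⊕ Fin m) =>
          ((v q.1 * v q.2 : ℝ) : ℂ)) q = (((T *ᵥ fun q => v q.1 * v q.2) q : ℝ) : ℂ) :=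
        (RingHom.map_mulVec Complex.ofRealHom T (fun q => v q.1 * v q.2) q).symm
      rw [hmm, hTw, one_smul]
    have hc := hspec 1 heig
    simp at hc
  -- the KKT point
  set zstar : Fin n ⊕ Fin m → ℝ := K⁻¹ *ᵥ bbar c A b β with hzstar
  have hKz : K *ᵥ zstar = bbar c A b β := by
    rw [hzstar, Matrix.mulVec_mulVec, Matrix.mul_nonsing_inv _ hKdet, Matrix.one_mulVec]
  set x : Fin n → ℝ := fun i => zstar (Sum.inl i) with hx
  set y : Fin m → ℝ := fun j => zstar (Sum.inr j) with hy
  have hz' : zstar = Sum.elim x y := by funext q; cases q <;> rfl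
  have hKz2 : (Matrix.fromBlocks (Smat H A β) (-Aᵀ) (β • A) 0) *ᵥ (Sum.elim x y) =
      bbar c A b β := by
    rw [← hz', ← hK]; exact hKz
  rw [Matrix.fromBlocks_mulVec] at hKz2
  have h1 : Smat H A β *ᵥ x + (-Aᵀ) *ᵥ y = -c + β • (Aᵀ *ᵥ b) := by
    funext i; exact congrFun hKz2 (Sum.inl i)
  have h2 : (β • A) *ᵥ x + (0 : Matrix (Fin m) (Fin m) ℝ) *ᵥ y = β • b := by
    funext j; exact congrFun hKz2 (Sum.inr j)
  have hAx : A *ᵥ x = b := by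
    rw [Matrix.zero_mulVec, add_zero, Matrix.smul_mulVec] at h2
    exact smul_right_injective _ (ne_of_gt hβ) h2
  have hKKT1 : H *ᵥ x + c - Aᵀ *ᵥ y = 0 := by
    rw [Smat, Matrix.add_mulVec, Matrix.smul_mulVec, ← Matrix.mulVec_mulVec, hAx,
      Matrix.neg_mulVec] at h1
    funext i
    have hi := congrFun h1 i
    simp only [Pi.add_apply, Pi.neg_apply, Pi.smul_apply, Pi.sub_apply, Pi.zero_apply,
      smul_eq_mul] at hi ⊢
    linarith
  -- zstar is a common fixed point
  have hfixz : ∀ g : UpdateOrder n p s,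
      Mmat H A β g.1 *ᵥ zstar + (Lbar H A β g.1)⁻¹ *ᵥ bbar c A b β = zstar := by
    intro g
    have h2' : (Lbar H A β g.1 - Rbar H A β g.1) *ᵥ zstar = bbar c A b β := by
      rw [hKsub g]; exact hKz
    rw [Matrix.sub_mulVec] at h2'
    have h1' : Rbar H A β g.1 *ᵥ zstar + bbar c A b β = Lbar H A β g.1 *ᵥ zstar := by
      rw [← h2']; abel
    calc Mmat H A β g.1 *ᵥ zstar + (Lbar H A β g.1)⁻¹ *ᵥ bbar c A b β
        = (Lbar H A β g.1)⁻¹ *ᵥ (Rbar H A β g.1 *ᵥ zstar)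
            + (Lbar H A β g.1)⁻¹ *ᵥ bbar c A b β := by
          rw [Mmat, ← Matrix.mulVec_mulVec]
      _ = (Lbar H A β g.1)⁻¹ *ᵥ (Rbar H A β g.1 *ᵥ zstar + bbar c A b β) := by
          rw [Matrix.mulVec_add]
      _ = (Lbar H A β g.1)⁻¹ *ᵥ (Lbar H A β g.1 *ᵥ zstar) := by rw [h1']
      _ = ((Lbar H A β g.1)⁻¹ * Lbar H A β g.1) *ᵥ zstar := by rw [Matrix.mulVec_mulVec]
      _ = zstar := by rw [Matrix.nonsing_inv_mul _ (hLu g), Matrix.one_mulVec]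
  -- error representation
  set e0 : Fin n ⊕ Fin m → ℝ := z0 - zstar with he0
  have he : ∀ k ω, z k ω - zstar = RACproof.Pprod H A β k (fun j => σ (j : ℕ) ω) *ᵥ e0 := by
    intro k
    induction k with
    | zero =>
      intro ω
      rw [hz0 ω]
      show z0 - zstar = (1 : Matrix (Fin n ⊕ Fin m) (Fin n ⊕ Fin m) ℝ) *ᵥ e0
      rw [Matrix.one_mulVec, he0]
    | succ k ih =>
      intro ω
      rw [hz k ω]
      have hstep : Mmat H A β (σ k ω).1 *ᵥ z k ω
            + (Lbar H A β (σ k ω).1)⁻¹ *ᵥ bbar c A b β - zstar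
          = Mmat H A β (σ k ω).1 *ᵥ (z k ω - zstar) := by
        conv_lhs => rw [← hfixz (σ k ω)]
        rw [Matrix.mulVec_sub]; abel
      rw [hstep, ih ω, Matrix.mulVec_mulVec]
      rfl
  -- the key expectation identity
  set w0 : ((Fin n ⊕ Fin m) × (Fin n ⊕ Fin m)) → ℝ := fun q => e0 q.1 * e0 q.2 with hw0
  have hkey : ∀ k : ℕ,
      (∑ g : Fin k → UpdateOrder n p s,
        fun q : (Fin n ⊕ Fin m) × (Fin n ⊕ Fin m) =>
          (RACproof.Pprod H A β k g *ᵥ e0) q.1 * (RACproof.Pprod H A β k g *ᵥ e0) q.2)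
      = ((Fintype.card (UpdateOrder n p s) : ℝ)) ^ k • (T ^ k *ᵥ w0) := by
    intro k
    induction k with
    | zero =>
      rw [pow_zero, pow_zero, one_smul, Matrix.one_mulVec]
      rw [Fintype.sum_unique]
      show (fun q => ((1 : Matrix (Fin n ⊕ Fin m) (Fin n ⊕ Fin m) ℝ) *ᵥ e0) q.1 *
        ((1 : Matrix (Fin n ⊕ Fin m) (Fin n ⊕ Fin m) ℝ) *ᵥ e0) q.2) = w0
      rw [Matrix.one_mulVec, hw0]
    | succ k ih =>
      have hsnoc : ∀ (h : Fin k → UpdateOrder n p s) (a : UpdateOrder n p s),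
          RACproof.Pprod H A β (k+1) (Fin.snoc h a) = Mmat H A β a.1 *
            RACproof.Pprod H A β k h := by
        intro h a
        show Mmat H A β ((Fin.snoc h a : Fin (k+1) → UpdateOrder n p s) (Fin.last k)).1 *
          RACproof.Pprod H A β k (fun j => (Fin.snoc h a : Fin (k+1) → _) j.castSucc) = _
        simp only [Fin.snoc_last, Fin.snoc_castSucc]
      rw [← Fintype.sum_equiv (RACproof.snocEquiv (UpdateOrder n p s) k)
        (fun xx => fun q : (Fin n ⊕ Fin m) × (Fin n ⊕ Fin m) =>
          (RACproof.Pprod H A β (k+1) ((RACproof.snocEquiv (UpdateOrder n p s) k) xx) *ᵥ e0) q.1 *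
          (RACproof.Pprod H A β (k+1) ((RACproof.snocEquiv (UpdateOrder n p s) k) xx) *ᵥ e0) q.2)
        _ (fun xx => rfl)]
      have hterm : ∀ xx : (Fin k → UpdateOrder n p s) × UpdateOrder n p s,
          (fun q : (Fin n ⊕ Fin m) × (Fin n ⊕ Fin m) =>
            (RACproof.Pprod H A β (k+1) ((RACproof.snocEquiv (UpdateOrder n p s) k) xx) *ᵥ e0) q.1 *
            (RACproof.Pprod H A β (k+1) ((RACproof.snocEquiv (UpdateOrder n p s) k) xx) *ᵥ e0) q.2)
          = (Mmat H A β xx.2.1 ⊗ₖ Mmat H A β xx.2.1) *ᵥ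
              (fun q => (RACproof.Pprod H A β k xx.1 *ᵥ e0) q.1 *
                (RACproof.Pprod H A β k xx.1 *ᵥ e0) q.2) := by
        intro xx
        rw [RACproof.kron_mulVec]
        have hp1 : RACproof.Pprod H A β (k+1) ((RACproof.snocEquiv (UpdateOrder n p s) k) xx) *ᵥ e0
            = Mmat H A β xx.2.1 *ᵥ (RACproof.Pprod H A β k xx.1 *ᵥ e0) := by
          have hxe : (RACproof.snocEquiv (UpdateOrder n p s) k) xx = Fin.snoc xx.1 xx.2 := RACproof.snocEquiv_apply xx
          rw [hxe, hsnoc xx.1 xx.2, ← Matrix.mulVec_mulVec]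
        rw [hp1]
      rw [Finset.sum_congr rfl (fun xx _ => hterm xx)]
      rw [Fintype.sum_prod_type, Finset.sum_comm]
      have hinner : ∀ a : UpdateOrder n p s,
          (∑ h : Fin k → UpdateOrder n p s,
            (Mmat H A β a.1 ⊗ₖ Mmat H A β a.1) *ᵥ
              (fun q => (RACproof.Pprod H A β k h *ᵥ e0) q.1 *
                (RACproof.Pprod H A β k h *ᵥ e0) q.2))
          = ((Fintype.card (UpdateOrder n p s) : ℝ)) ^ k •
              ((Mmat H A β a.1 ⊗ₖ Mmat H A β a.1) *ᵥ (T ^ k *ᵥ w0)) := by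
        intro a
        rw [← RACproof.mulVec_sumv, ih, Matrix.mulVec_smul]
      rw [Finset.sum_congr rfl (fun a _ => hinner a), ← Finset.smul_sum]
      rw [← RACproof.sumM_mulVec]
      have hsumT : (∑ a : UpdateOrder n p s, Mmat H A β a.1 ⊗ₖ Mmat H A β a.1)
          = (Fintype.card (UpdateOrder n p s) : ℝ) • T := by
        rw [hT, smul_smul, mul_inv_cancel₀ hΓR, one_smul]
      rw [hsumT, Matrix.smul_mulVec, Matrix.mulVec_mulVec, smul_smul]
      rw [← pow_succ, ← pow_succ']
  -- geometric decay from the spectral hypothesis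
  obtain ⟨u, hu0, husum, hubd⟩ := RACproof.geom_bound (T.map Complex.ofReal)
    (fun lam hl => hspec lam hl)
  set w0c : ((Fin n ⊕ Fin m) × (Fin n ⊕ Fin m)) → ℂ := fun q => ((w0 q : ℝ) : ℂ) with hw0c
  have hmapk : ∀ (k : ℕ) (q : (Fin n ⊕ Fin m) × (Fin n ⊕ Fin m)),
      (((T ^ k *ᵥ w0) q : ℝ) : ℂ) = ((T.map Complex.ofReal) ^ k *ᵥ w0c) q := by
    intro k q
    have hpow : (T.map Complex.ofReal) ^ k = (T ^ k).map Complex.ofReal := by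
      rw [show T.map Complex.ofReal = Complex.ofRealHom.mapMatrix T from rfl, ← map_pow,
        RingHom.mapMatrix_apply]
      rfl
    rw [hpow]
    exact RingHom.map_mulVec Complex.ofRealHom (T ^ k) w0 q
  set Cu : ℝ := (Fintype.card (Fin n ⊕ Fin m) : ℝ) * ‖w0c‖ with hCu
  have hCu0 : 0 ≤ Cu := by
    rw [hCu]; positivity
  have hDsum : ∀ k : ℕ, ∑ i : Fin n ⊕ Fin m, (T ^ k *ᵥ w0) (i, i) ≤ Cu * u k := by
    intro k
    have hterm : ∀ i : Fin n ⊕ Fin m, (T ^ k *ᵥ w0) (i, i) ≤ u k * ‖w0c‖ := by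
      intro i
      have hb1 : ‖(((T ^ k *ᵥ w0) (i, i) : ℝ) : ℂ)‖ ≤ u k * ‖w0c‖ := by
        rw [hmapk k (i, i)]; exact hubd k w0c (i, i)
      rw [Complex.norm_real, Real.norm_eq_abs] at hb1
      exact (le_abs_self _).trans hb1
    calc ∑ i : Fin n ⊕ Fin m, (T ^ k *ᵥ w0) (i, i)
        ≤ ∑ _i : Fin n ⊕ Fin m, u k * ‖w0c‖ := Finset.sum_le_sum (fun i _ => hterm i)
      _ = (Fintype.card (Fin n ⊕ Fin m) : ℝ) * (u k * ‖w0c‖) := by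
          rw [Finset.sum_const, Finset.card_univ, nsmul_eq_mul]
      _ = Cu * u k := by rw [hCu]; ring
  -- probability of a fixed tuple of update orders
  have hC : ∀ (k : ℕ) (g : Fin k → UpdateOrder n p s),
      μ {ω | ∀ j : Fin k, σ (j : ℕ) ω = g j}
        = (Fintype.card (UpdateOrder n p s) : ℝ≥0∞)⁻¹ ^ k := by
    intro k g
    set f : ℕ → Set Ω := fun i => if h : i < k then σ i ⁻¹' {g ⟨i, h⟩} else Set.univ with hf
    have hset : {ω | ∀ j : Fin k, σ (j : ℕ) ω = g j} = ⋂ i ∈ Finset.range k, f i := by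
      ext ω
      simp only [Set.mem_setOf_eq, Set.mem_iInter, Finset.mem_range, hf]
      constructor
      · intro hall i hi
        rw [dif_pos hi]
        exact hall ⟨i, hi⟩
      · intro hall j
        have hj := hall j.1 j.2
        rw [dif_pos j.2] at hj
        simpa using hj
    have hmeasf : ∀ i ∈ Finset.range k,
        MeasurableSet[(inferInstance :
          MeasurableSpace (UpdateOrder n p s)).comap (σ i)] (f i) := by
      intro i hi
      have hi' := Finset.mem_range.mp hi
      simp only [hf]
      rw [dif_pos hi']
      exact ⟨{g ⟨i, hi'⟩}, measurableSet_singleton _, rfl⟩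
    rw [hset, hindep.meas_biInter hmeasf]
    have hprod : ∀ i ∈ Finset.range k,
        μ (f i) = (Fintype.card (UpdateOrder n p s) : ℝ≥0∞)⁻¹ := by
      intro i hi
      have hi' := Finset.mem_range.mp hi
      have hfi : f i = {ω | σ i ω = g ⟨i, hi'⟩} := by
        simp only [hf]
        rw [dif_pos hi']
        ext ω; simp
      rw [hfi, hunif i _]
    rw [Finset.prod_congr rfl hprod, Finset.prod_const, Finset.card_range]
  -- Borel–Cantelli, for each tolerance 1/(j+1)
  have main : ∀ j : ℕ, ∀ᵐ ω ∂μ, ∀ᶠ k in atTop, ‖z k ω - zstar‖ < 1 / ((j : ℝ) + 1) := by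
    intro j
    set ε : ℝ := 1 / ((j : ℝ) + 1) with hε
    have hεpos : 0 < ε := by rw [hε]; positivity
    set E : ℕ → Set Ω := fun k => {ω | ε ≤ ‖z k ω - zstar‖} with hE
    have hEbound : ∀ k, μ (E k) ≤ ENNReal.ofReal ((Cu * u k) / ε ^ 2) := by
      intro k
      set bad : Finset (Fin k → UpdateOrder n p s) :=
        Finset.univ.filter (fun g => ε ≤ ‖RACproof.Pprod H A β k g *ᵥ e0‖) with hbad
      have hEsub : E k ⊆ ⋃ g ∈ bad, {ω | ∀ j : Fin k, σ (j : ℕ) ω = g j} := by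
        intro ω hω
        have hmem : (fun j : Fin k => σ (j : ℕ) ω) ∈ bad := by
          rw [hbad, Finset.mem_filter]
          refine ⟨Finset.mem_univ _, ?_⟩
          rw [← he k ω]
          exact hω
        exact Set.mem_biUnion hmem (fun j => rfl)
      have step1 : μ (E k) ≤ (bad.card : ℝ≥0∞) *
          (Fintype.card (UpdateOrder n p s) : ℝ≥0∞)⁻¹ ^ k := by
        calc μ (E k) ≤ μ (⋃ g ∈ bad, {ω | ∀ j : Fin k, σ (j : ℕ) ω = g j}) :=
              measure_mono hEsub
          _ ≤ ∑ g ∈ bad, μ {ω | ∀ j : Fin k, σ (j : ℕ) ω = g j} :=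
              measure_biUnion_finset_le _ _
          _ = ∑ _g ∈ bad, (Fintype.card (UpdateOrder n p s) : ℝ≥0∞)⁻¹ ^ k :=
              Finset.sum_congr rfl (fun g _ => hC k g)
          _ = (bad.card : ℝ≥0∞) * (Fintype.card (UpdateOrder n p s) : ℝ≥0∞)⁻¹ ^ k := by
              rw [Finset.sum_const, nsmul_eq_mul]
      have hreal : (bad.card : ℝ) * ((Fintype.card (UpdateOrder n p s) : ℝ))⁻¹ ^ k
          ≤ (Cu * u k) / ε ^ 2 := by
        have hsq : ∀ g ∈ bad, ε ^ 2 ≤ ∑ i : Fin n ⊕ Fin m,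
            (RACproof.Pprod H A β k g *ᵥ e0) i * (RACproof.Pprod H A β k g *ᵥ e0) i := by
          intro g hg
          rw [hbad, Finset.mem_filter] at hg
          have hnorm := hg.2
          set uv : Fin n ⊕ Fin m → ℝ := RACproof.Pprod H A β k g *ᵥ e0 with huv
          have hS0 : 0 ≤ ∑ i : Fin n ⊕ Fin m, uv i * uv i :=
            Finset.sum_nonneg fun i _ => mul_self_nonneg _
          have hpn : ‖uv‖ ≤ Real.sqrt (∑ i : Fin n ⊕ Fin m, uv i * uv i) := by
            rw [pi_norm_le_iff_of_nonneg (Real.sqrt_nonneg _)]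
            intro i
            rw [Real.norm_eq_abs]
            refine Real.abs_le_sqrt ?_
            calc uv i ^ 2 = uv i * uv i := sq (uv i)
              _ ≤ ∑ i' : Fin n ⊕ Fin m, uv i' * uv i' :=
                  Finset.single_le_sum (f := fun i' => uv i' * uv i')
                    (fun i' _ => mul_self_nonneg _) (Finset.mem_univ i)
          calc ε ^ 2 ≤ ‖uv‖ ^ 2 := by
                have := pow_le_pow_left₀ hεpos.le hnorm 2
                exact this
            _ ≤ Real.sqrt (∑ i : Fin n ⊕ Fin m, uv i * uv i) ^ 2 :=
                pow_le_pow_left₀ (norm_nonneg _) hpn 2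
            _ = ∑ i : Fin n ⊕ Fin m, uv i * uv i := Real.sq_sqrt hS0
        have hsum1 : (bad.card : ℝ) * ε ^ 2 ≤
            ∑ g : Fin k → UpdateOrder n p s, ∑ i : Fin n ⊕ Fin m,
              (RACproof.Pprod H A β k g *ᵥ e0) i * (RACproof.Pprod H A β k g *ᵥ e0) i := by
          calc (bad.card : ℝ) * ε ^ 2 = ∑ _g ∈ bad, ε ^ 2 := by
                rw [Finset.sum_const, nsmul_eq_mul]
            _ ≤ ∑ g ∈ bad, ∑ i : Fin n ⊕ Fin m,
                  (RACproof.Pprod H A β k g *ᵥ e0) i * (RACproof.Pprod H A β k g *ᵥ e0) i :=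
                Finset.sum_le_sum hsq
            _ ≤ ∑ g : Fin k → UpdateOrder n p s, ∑ i : Fin n ⊕ Fin m,
                  (RACproof.Pprod H A β k g *ᵥ e0) i * (RACproof.Pprod H A β k g *ᵥ e0) i :=
                Finset.sum_le_sum_of_subset_of_nonneg (Finset.subset_univ _)
                  (fun g _ _ => Finset.sum_nonneg fun i _ => mul_self_nonneg _)
        have hsum2 : (∑ g : Fin k → UpdateOrder n p s, ∑ i : Fin n ⊕ Fin m,
              (RACproof.Pprod H A β k g *ᵥ e0) i * (RACproof.Pprod H A β k g *ᵥ e0) i)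
            = (Fintype.card (UpdateOrder n p s) : ℝ) ^ k *
                ∑ i : Fin n ⊕ Fin m, (T ^ k *ᵥ w0) (i, i) := by
          rw [Finset.sum_comm]
          have hgi : ∀ i : Fin n ⊕ Fin m,
              (∑ g : Fin k → UpdateOrder n p s,
                (RACproof.Pprod H A β k g *ᵥ e0) i * (RACproof.Pprod H A β k g *ᵥ e0) i)
              = (Fintype.card (UpdateOrder n p s) : ℝ) ^ k * (T ^ k *ᵥ w0) (i, i) := by
            intro i
            have h4 := congrFun (hkey k) (i, i)
            rw [Finset.sum_apply] at h4
            simpa using h4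
          rw [Finset.sum_congr rfl (fun i _ => hgi i), ← Finset.mul_sum]
        have hXpos : (0 : ℝ) < (Fintype.card (UpdateOrder n p s) : ℝ) ^ k := by positivity
        rw [inv_pow, ← div_eq_mul_inv, div_le_div_iff₀ hXpos (by positivity : (0:ℝ) < ε ^ 2)]
        calc (bad.card : ℝ) * ε ^ 2
            ≤ (Fintype.card (UpdateOrder n p s) : ℝ) ^ k *
                ∑ i : Fin n ⊕ Fin m, (T ^ k *ᵥ w0) (i, i) := by rw [← hsum2]; exact hsum1
          _ ≤ (Fintype.card (UpdateOrder n p s) : ℝ) ^ k * (Cu * u k) :=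
              mul_le_mul_of_nonneg_left (hDsum k) hXpos.le
          _ = Cu * u k * (Fintype.card (UpdateOrder n p s) : ℝ) ^ k := by ring
      calc μ (E k) ≤ (bad.card : ℝ≥0∞) *
            (Fintype.card (UpdateOrder n p s) : ℝ≥0∞)⁻¹ ^ k := step1
        _ = ENNReal.ofReal ((bad.card : ℝ) *
              ((Fintype.card (UpdateOrder n p s) : ℝ))⁻¹ ^ k) := by
            rw [ENNReal.ofReal_mul (Nat.cast_nonneg _), ENNReal.ofReal_natCast,
              ENNReal.ofReal_pow (by positivity),
              ENNReal.ofReal_inv_of_pos (by exact_mod_cast hΓpos), ENNReal.ofReal_natCast]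
        _ ≤ ENNReal.ofReal ((Cu * u k) / ε ^ 2) := ENNReal.ofReal_le_ofReal hreal
    have hsumtop : (∑' k, μ (E k)) ≠ ⊤ := by
      have hsummable : Summable (fun k => (Cu * u k) / ε ^ 2) :=
        (husum.mul_left Cu).div_const (ε ^ 2)
      have hle : (∑' k, μ (E k)) ≤ ∑' k, ENNReal.ofReal ((Cu * u k) / ε ^ 2) :=
        ENNReal.tsum_le_tsum hEbound
      have heq : (∑' k, ENNReal.ofReal ((Cu * u k) / ε ^ 2))
          = ENNReal.ofReal (∑' k, (Cu * u k) / ε ^ 2) :=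
        (ENNReal.ofReal_tsum_of_nonneg
          (fun k => div_nonneg (mul_nonneg hCu0 (hu0 k)) (sq_nonneg ε)) hsummable).symm
      rw [heq] at hle
      exact ne_top_of_le_ne_top ENNReal.ofReal_ne_top hle
    have h0 := MeasureTheory.measure_limsup_atTop_eq_zero hsumtop
    have hae := measure_eq_zero_iff_ae_notMem.1 h0
    filter_upwards [hae] with ω hω
    have hnotfreq : ∀ᶠ k in atTop, ω ∉ E k :=
      Filter.not_frequently.mp (fun hfreq => hω (mem_limsup_iff_frequently_mem.mpr hfreq))
    refine hnotfreq.mono fun k hk => ?_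
    exact lt_of_not_ge hk
  -- conclusion
  refine ⟨zstar, ⟨hKKT1, hAx⟩, ?_⟩
  have hall : ∀ᵐ ω ∂μ, ∀ j : ℕ, ∀ᶠ k in atTop, ‖z k ω - zstar‖ < 1 / ((j : ℝ) + 1) :=
    (MeasureTheory.ae_all_iff).2 main
  filter_upwards [hall] with ω hω
  rw [Metric.tendsto_atTop]
  intro ε' hε'
  obtain ⟨j, hj⟩ := exists_nat_one_div_lt hε'
  obtain ⟨Nk, hNk⟩ := (hω j).exists_forall_of_atTop
  refine ⟨Nk, fun k hk => ?_⟩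
  rw [dist_eq_norm]
  exact (hNk k hk).trans hj
end

section
/- Suppose Assumption 1 holds and that every eigenvalue of QS is real and lies in [0, 4/3). Then every complex eigenvalue λ of the expected mapping matrix M satisfies |λ| < 1 or λ = 1. -/
open Matrix Filter Topology MeasureTheory ProbabilityTheory Kronecker

open RAC Matrix

namespace RAC
open scoped ComplexOrder

section Structural

variable {n m p s : ℕ} (H : Matrix (Fin n) (Fin n) ℝ) (A : Matrix (Fin m) (Fin n) ℝ) (β : ℝ)

/-- `S` is symmetric. -/
lemma Smat_transpose (hH : H.PosSemidef) : (Smat H A β)ᵀ = Smat H A β := by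
  have hHt : Hᵀ = H := by
    have := hH.1
    rwa [Matrix.IsHermitian, conjTranspose_eq_transpose_of_trivial] at this
  unfold Smat
  rw [transpose_add, transpose_smul, transpose_mul, transpose_transpose, hHt]

/-- `S` is positive semidefinite. -/
lemma Smat_posSemidef (hH : H.PosSemidef) (hβ : 0 < β) : (Smat H A β).PosSemidef := by
  refine Matrix.PosSemidef.of_dotProduct_mulVec_nonneg ?_ ?_
  · rw [Matrix.IsHermitian, conjTranspose_eq_transpose_of_trivial, Smat_transpose H A β hH]
  · intro x
    unfold Smat
    rw [add_mulVec, dotProduct_add, smul_mulVec, dotProduct_smul]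
    have h1 : 0 ≤ star x ⬝ᵥ (H *ᵥ x) := hH.dotProduct_mulVec_nonneg x
    have h2 : 0 ≤ star x ⬝ᵥ ((Aᵀ * A) *ᵥ x) := by
      rw [← mulVec_mulVec, dotProduct_mulVec, star_trivial, vecMul_transpose]
      have := dotProduct_star_self_nonneg (A *ᵥ x)
      rwa [star_trivial] at this
    have := smul_nonneg hβ.le h2
    exact add_nonneg h1 this

/-- transpose of `L` under order reversal. -/
lemma Lmat_rev (hH : H.PosSemidef) (σ : Fin n → Fin p) :
    Lmat H A β (Fin.rev ∘ σ) = (Lmat H A β σ)ᵀ := by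
  ext a b
  have hS : Smat H A β a b = Smat H A β b a := by
    conv_lhs => rw [← Smat_transpose H A β hH]
    rfl
  simp only [Lmat, Matrix.of_apply, transpose_apply, Function.comp_apply, Fin.rev_le_rev]
  rw [hS]

lemma isUpdateOrder_rev (σ : Fin n → Fin p) (hσ : IsUpdateOrder n p s σ) :
    IsUpdateOrder n p s (Fin.rev ∘ σ) := by
  intro i
  have : (Finset.univ.filter fun a => (Fin.rev ∘ σ) a = i)
      = Finset.univ.filter fun a => σ a = Fin.rev i := by
    apply Finset.filter_congr
    intro a _
    simp [Fin.rev_eq_iff]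
  rw [this]
  exact hσ (Fin.rev i)

end Structural

end RAC

namespace RAC
open scoped ComplexOrder

/-- congruence preserves positive definiteness. -/
lemma posDef_conj {𝕜 : Type*} [RCLike 𝕜] {ι : Type*} [Fintype ι] [DecidableEq ι]
    (M B : Matrix ι ι 𝕜) (hM : M.PosDef) (hB : IsUnit B.det) : (B * M * Bᴴ).PosDef := by
  have hBH : IsUnit (Bᴴ).det := by
    rw [Matrix.det_conjTranspose]; exact hB.star
  refine Matrix.PosDef.of_dotProduct_mulVec_pos ?_ ?_
  · have h1 := hM.1
    rw [Matrix.IsHermitian] at h1 ⊢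
    rw [conjTranspose_mul, conjTranspose_mul, conjTranspose_conjTranspose, h1, mul_assoc]
  · intro x hx
    have hinj : Function.Injective (Bᴴ).mulVec :=
      Matrix.mulVec_injective_iff_isUnit.mpr (isUnit_iff_isUnit_det _ |>.mpr hBH)
    have hz : Bᴴ *ᵥ x ≠ 0 := fun h0 => hx (hinj (by simpa using h0))
    have key : star x ⬝ᵥ ((B * M * Bᴴ) *ᵥ x) = star (Bᴴ *ᵥ x) ⬝ᵥ (M *ᵥ (Bᴴ *ᵥ x)) := by
      rw [← mulVec_mulVec, ← mulVec_mulVec, dotProduct_mulVec, star_mulVec,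
        conjTranspose_conjTranspose]
    rw [key]
    exact hM.dotProduct_mulVec_pos hz

lemma sum_mulVec' {ι κ : Type*} [Fintype ι] [Fintype κ] (f : κ → Matrix ι ι ℝ) (x : ι → ℝ) :
    (∑ σ : κ, f σ) *ᵥ x = ∑ σ : κ, (f σ) *ᵥ x := by
  funext i
  simp only [mulVec, dotProduct, Finset.sum_apply, Matrix.sum_apply, Finset.sum_mul]
  rw [Finset.sum_comm]

section Structural

variable {n m p s : ℕ} (H : Matrix (Fin n) (Fin n) ℝ) (A : Matrix (Fin m) (Fin n) ℝ) (β : ℝ)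

/-- The block diagonal part of `S`. -/
def Dmat (σ : Fin n → Fin p) : Matrix (Fin n) (Fin n) ℝ :=
  Matrix.of fun a b => if σ a = σ b then Smat H A β a b else 0

lemma Dmat_posDef (hH : H.PosSemidef) (hA1 : Assumption1 H A β s)
    (σ : Fin n → Fin p) (hσ : IsUpdateOrder n p s σ) : (Dmat H A β σ).PosDef := by
  have hSsymm : ∀ a b, Smat H A β a b = Smat H A β b a := by
    intro a b
    conv_lhs => rw [← Smat_transpose H A β hH]
    rfl
  refine Matrix.PosDef.of_dotProduct_mulVec_pos ?_ ?_
  · rw [Matrix.IsHermitian, conjTranspose_eq_transpose_of_trivial]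
    ext a b
    simp only [Dmat, transpose_apply, Matrix.of_apply]
    rcases eq_or_ne (σ b) (σ a) with h | h
    · rw [if_pos h, if_pos h.symm, hSsymm b a]
    · rw [if_neg h, if_neg (Ne.symm h)]
  · intro x hx
    rw [star_trivial]
    set filt : Fin p → Finset (Fin n) := fun i => Finset.univ.filter (fun a => σ a = i) with hfilt
    set Φ : Fin p → ℝ := fun i => ∑ a ∈ filt i, ∑ b ∈ filt i, x a * Smat H A β a b * x b with hΦ
    have key : x ⬝ᵥ (Dmat H A β σ *ᵥ x) = ∑ i : Fin p, Φ i := by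
      have h1 : x ⬝ᵥ (Dmat H A β σ *ᵥ x)
          = ∑ a : Fin n, ∑ b ∈ filt (σ a), x a * Smat H A β a b * x b := by
        simp only [dotProduct, mulVec, Finset.mul_sum]
        refine Finset.sum_congr rfl fun a _ => ?_
        rw [Finset.sum_filter]
        refine Finset.sum_congr rfl fun b _ => ?_
        simp only [Dmat, Matrix.of_apply, hfilt]
        rcases eq_or_ne (σ a) (σ b) with h | h
        · rw [if_pos h, if_pos h.symm]; ring
        · rw [if_neg h, if_neg (Ne.symm h)]; simp
      rw [h1]
      have h2 := Finset.sum_fiberwise_eq_sum_filter Finset.univ Finset.univ σ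
        (fun a => ∑ b ∈ filt (σ a), x a * Smat H A β a b * x b)
      simp only [Finset.mem_univ, Finset.filter_true] at h2
      rw [← h2]
      refine Finset.sum_congr rfl fun i _ => Finset.sum_congr rfl fun a ha => ?_
      have ha' : σ a = i := by
        have := Finset.mem_filter.mp ha
        exact this.2
      rw [ha']
    rw [key]
    -- each fiber form equals the quadratic form of a positive definite submatrix
    have hform : ∀ i : Fin p, Φ i = star (fun a : (filt i : Finset (Fin n)) => x a) ⬝ᵥ
        (((Smat H A β).submatrix (fun a : (filt i : Finset (Fin n)) => (a : Fin n))
          (fun a : (filt i : Finset (Fin n)) => (a : Fin n)))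
          *ᵥ (fun a : (filt i : Finset (Fin n)) => x a)) := by
      intro i
      rw [star_trivial]
      simp only [dotProduct, mulVec, submatrix_apply]
      rw [Finset.sum_coe_sort (filt i)
        (fun a => x a * ∑ b : (filt i : Finset (Fin n)), Smat H A β a (↑b) * x ↑b), hΦ]
      refine Finset.sum_congr rfl fun a _ => ?_
      rw [Finset.sum_coe_sort (filt i) (fun b => Smat H A β a b * x b), Finset.mul_sum]
      refine Finset.sum_congr rfl fun b _ => by ring
    have hpos : ∀ i : Fin p, 0 ≤ Φ i := by
      intro i
      rw [hform i]
      exact (hA1 (filt i) (hσ i)).posSemidef.dotProduct_mulVec_nonneg _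
    obtain ⟨a0, ha0⟩ := Function.ne_iff.mp hx
    have hz0 : (fun a : (filt (σ a0) : Finset (Fin n)) => x a) ≠ 0 := by
      intro hcon
      have hmem : a0 ∈ filt (σ a0) := Finset.mem_filter.mpr ⟨Finset.mem_univ _, rfl⟩
      have := congrFun hcon ⟨a0, hmem⟩
      exact ha0 this
    have hΦpos : 0 < Φ (σ a0) := by
      rw [hform (σ a0)]
      exact (hA1 (filt (σ a0)) (hσ (σ a0))).dotProduct_mulVec_pos hz0
    exact Finset.sum_pos' (fun i _ => hpos i) ⟨σ a0, Finset.mem_univ _, hΦpos⟩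

end Structural

end RAC

namespace RAC
open scoped ComplexOrder

section Structural2

variable {n m p s : ℕ} (H : Matrix (Fin n) (Fin n) ℝ) (A : Matrix (Fin m) (Fin n) ℝ) (β : ℝ)

lemma Lmat_add_transpose (hH : H.PosSemidef) (σ : Fin n → Fin p) :
    Lmat H A β σ + (Lmat H A β σ)ᵀ = Smat H A β + Dmat H A β σ := by
  have hSsymm : ∀ a b, Smat H A β a b = Smat H A β b a := by
    intro a b
    conv_lhs => rw [← Smat_transpose H A β hH]
    rfl
  ext a b
  simp only [Matrix.add_apply, transpose_apply, Lmat, Dmat, Matrix.of_apply]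
  rcases le_or_gt (σ b) (σ a) with h1 | h1 <;> rcases le_or_gt (σ a) (σ b) with h2 | h2
  · rw [if_pos h1, if_pos h2, if_pos (le_antisymm h2 h1), hSsymm b a]
  · rw [if_pos h1, if_neg (not_le.mpr h2), if_neg (fun hc => absurd hc.le (not_le.mpr h2))]
  · rw [if_neg (not_le.mpr h1), if_pos h2, if_neg (fun hc => absurd hc.ge (not_le.mpr h1)),
      hSsymm b a]
    ring
  · exact absurd h1 (not_lt.mpr h2.le)

lemma SD_posDef (hH : H.PosSemidef) (hβ : 0 < β) (hA1 : Assumption1 H A β s)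
    (σ : Fin n → Fin p) (hσ : IsUpdateOrder n p s σ) :
    (Smat H A β + Dmat H A β σ).PosDef :=
  Matrix.PosDef.posSemidef_add (Smat_posSemidef H A β hH hβ) (Dmat_posDef H A β hH hA1 σ hσ)

lemma Lmat_isUnit_det (hH : H.PosSemidef) (hβ : 0 < β) (hA1 : Assumption1 H A β s)
    (σ : Fin n → Fin p) (hσ : IsUpdateOrder n p s σ) : IsUnit (Lmat H A β σ).det := by
  set L := Lmat H A β σ with hL
  by_contra hdet
  have hdet0 : L.det = 0 := by
    by_contra h0
    exact hdet (Ne.isUnit h0)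
  obtain ⟨v, hv0, hv⟩ := (Matrix.exists_mulVec_eq_zero_iff).mpr hdet0
  have h1 : v ⬝ᵥ ((L + Lᵀ) *ᵥ v) = 0 := by
    rw [add_mulVec, dotProduct_add, hv, dotProduct_zero, zero_add, mulVec_transpose,
      dotProduct_comm, ← dotProduct_mulVec, hv, dotProduct_zero]
  have h2 := (SD_posDef H A β hH hβ hA1 σ hσ).dotProduct_mulVec_pos hv0
  rw [star_trivial, ← Lmat_add_transpose H A β hH σ, h1] at h2
  exact lt_irrefl _ h2

lemma Linv_add_transpose_posDef (hH : H.PosSemidef) (hβ : 0 < β) (hA1 : Assumption1 H A β s)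
    (σ : Fin n → Fin p) (hσ : IsUpdateOrder n p s σ) :
    ((Lmat H A β σ)⁻¹ + ((Lmat H A β σ)⁻¹)ᵀ).PosDef := by
  set L := Lmat H A β σ with hLdef
  have hdet : IsUnit L.det := Lmat_isUnit_det H A β hH hβ hA1 σ hσ
  have key : L⁻¹ + (L⁻¹)ᵀ = L⁻¹ * (L + Lᵀ) * (L⁻¹)ᴴ := by
    rw [conjTranspose_eq_transpose_of_trivial, transpose_nonsing_inv, mul_add, add_mul,
      nonsing_inv_mul L hdet, mul_assoc, mul_nonsing_inv Lᵀ (by rwa [det_transpose]),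
      one_mul, mul_one, ← transpose_nonsing_inv]
    exact add_comm _ _
  rw [key]
  exact posDef_conj _ _ (by rw [Lmat_add_transpose H A β hH σ]; exact SD_posDef H A β hH hβ hA1 σ hσ)
    (isUnit_nonsing_inv_det L hdet)

lemma Qmat_transpose (hH : H.PosSemidef) : (Qmat n m p s H A β)ᵀ = Qmat n m p s H A β := by
  unfold Qmat
  rw [transpose_smul, transpose_sum]
  congr 1
  have hf : Function.Bijective (fun σ : UpdateOrder n p s =>
      (⟨Fin.rev ∘ σ.1, isUpdateOrder_rev σ.1 σ.2⟩ : UpdateOrder n p s)) := by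
    apply Function.Involutive.bijective
    intro σ
    ext a
    simp [Fin.rev_rev]
  exact Fintype.sum_bijective _ hf _ _ (fun σ => by
    rw [transpose_nonsing_inv, ← Lmat_rev H A β hH σ.1])

lemma Qmat_posDef (hH : H.PosSemidef) (hβ : 0 < β) (hA1 : Assumption1 H A β s)
    (hcard : 0 < Fintype.card (UpdateOrder n p s)) : (Qmat n m p s H A β).PosDef := by
  have hne : Nonempty (UpdateOrder n p s) := Fintype.card_pos_iff.mp hcard
  refine Matrix.PosDef.of_dotProduct_mulVec_pos ?_ ?_
  · rw [Matrix.IsHermitian, conjTranspose_eq_transpose_of_trivial, Qmat_transpose H A β hH]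
  · intro x hx
    rw [star_trivial]
    unfold Qmat
    rw [smul_mulVec, dotProduct_smul, sum_mulVec']
    have hdist : x ⬝ᵥ (∑ σ : UpdateOrder n p s, (Lmat H A β σ.1)⁻¹ *ᵥ x)
        = ∑ σ : UpdateOrder n p s, x ⬝ᵥ ((Lmat H A β σ.1)⁻¹ *ᵥ x) := by
      simp only [dotProduct, Finset.sum_apply, Finset.mul_sum]
      rw [Finset.sum_comm]
    rw [hdist]
    have hterm : ∀ σ : UpdateOrder n p s, 0 < x ⬝ᵥ ((Lmat H A β σ.1)⁻¹ *ᵥ x) := by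
      intro σ
      have h2 := (Linv_add_transpose_posDef H A β hH hβ hA1 σ.1 σ.2).dotProduct_mulVec_pos hx
      rw [star_trivial, add_mulVec, dotProduct_add, mulVec_transpose] at h2
      have h3 : x ⬝ᵥ (x ᵥ* (Lmat H A β σ.1)⁻¹) = x ⬝ᵥ ((Lmat H A β σ.1)⁻¹ *ᵥ x) := by
        rw [dotProduct_comm, ← dotProduct_mulVec]
      rw [h3] at h2
      linarith
    have hsum : 0 < ∑ σ : UpdateOrder n p s, x ⬝ᵥ ((Lmat H A β σ.1)⁻¹ *ᵥ x) :=
      Finset.sum_pos (fun σ _ => hterm σ) Finset.univ_nonempty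
    have hc : (0:ℝ) < (Fintype.card (UpdateOrder n p s) : ℝ)⁻¹ := by
      rw [inv_pos]
      exact_mod_cast hcard
    simpa using mul_pos hc hsum

end Structural2

end RAC

namespace RAC
open scoped ComplexOrder

section Complexify

variable {k l : ℕ}

lemma map_mul_c (M : Matrix (Fin k) (Fin l) ℝ) (N : Matrix (Fin l) (Fin l) ℝ) :
    ((M * N).map Complex.ofReal) = (M.map Complex.ofReal) * (N.map Complex.ofReal) := by
  ext i j
  simp [Matrix.mul_apply, Matrix.map_apply]

lemma det_map_c (M : Matrix (Fin k) (Fin k) ℝ) :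
    (M.map Complex.ofReal).det = (M.det : ℂ) := by
  exact (RingHom.map_det Complex.ofRealHom M).symm

open scoped MatrixOrder in
lemma posSemidef_map_c {M : Matrix (Fin k) (Fin k) ℝ} (hM : M.PosSemidef) :
    (M.map Complex.ofReal).PosSemidef := by
  obtain ⟨B, hB⟩ := CStarAlgebra.nonneg_iff_eq_star_mul_self.mp hM.nonneg
  have : M.map Complex.ofReal = (B.map Complex.ofReal)ᴴ * (B.map Complex.ofReal) := by
    rw [hB]
    ext i j
    simp [Matrix.mul_apply, Matrix.map_apply, Matrix.conjTranspose_apply, Matrix.star_apply]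
  rw [this]
  exact Matrix.posSemidef_conjTranspose_mul_self _

lemma posDef_of_posSemidef_isUnit {P : Matrix (Fin k) (Fin k) ℂ} (hP : P.PosSemidef)
    (hdet : IsUnit P.det) : P.PosDef := by
  refine Matrix.PosDef.of_dotProduct_mulVec_pos hP.1 (fun x hx => ?_)
  rcases lt_or_eq_of_le (hP.dotProduct_mulVec_nonneg x) with h | h
  · exact h
  · exfalso
    have h0 : P *ᵥ x = 0 := (hP.dotProduct_mulVec_zero_iff x).mp h.symm
    have hinj : Function.Injective P.mulVec :=
      Matrix.mulVec_injective_iff_isUnit.mpr (isUnit_iff_isUnit_det _ |>.mpr hdet)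
    exact hx (hinj (by simpa using h0))

lemma posDef_map_c {M : Matrix (Fin k) (Fin k) ℝ} (hM : M.PosDef) :
    (M.map Complex.ofReal).PosDef := by
  refine posDef_of_posSemidef_isUnit (posSemidef_map_c hM.posSemidef) ?_
  rw [det_map_c]
  exact Ne.isUnit (by exact_mod_cast hM.det_pos.ne')

/-- A Hermitian matrix whose eigenvalues are `< c` satisfies `c • 1 - K ≻ 0`. -/
lemma smul_one_sub_posDef (K : Matrix (Fin k) (Fin k) ℂ) (hK : K.IsHermitian) (c : ℝ)
    (hc : ∀ i, hK.eigenvalues i < c) : ((c : ℂ) • (1 : Matrix (Fin k) (Fin k) ℂ) - K).PosDef := by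
  set U : Matrix (Fin k) (Fin k) ℂ := (hK.eigenvectorUnitary : Matrix (Fin k) (Fin k) ℂ) with hU
  have hUmem := (hK.eigenvectorUnitary).2
  have hUU : U * star U = 1 := (Matrix.mem_unitaryGroup_iff).mp hUmem
  have hdetU : IsUnit U.det := by
    apply IsUnit.of_mul_eq_one (star U).det
    rw [← Matrix.det_mul, hUU, Matrix.det_one]
  have hdiag : Matrix.diagonal (fun i => ((c - hK.eigenvalues i : ℝ) : ℂ))
      = (c : ℂ) • (1 : Matrix (Fin k) (Fin k) ℂ)
        - Matrix.diagonal (RCLike.ofReal ∘ hK.eigenvalues) := by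
    ext i j
    rcases eq_or_ne i j with h | h
    · subst h
      simp [Matrix.diagonal_apply_eq, Matrix.one_apply_eq]
    · simp [Matrix.diagonal_apply_ne _ h, Matrix.one_apply_ne h]
  have key : (c : ℂ) • (1 : Matrix (Fin k) (Fin k) ℂ) - K
      = U * Matrix.diagonal (fun i => ((c - hK.eigenvalues i : ℝ) : ℂ)) * Uᴴ := by
    rw [hdiag, mul_sub, sub_mul]
    rw [mul_smul_comm, mul_one, smul_mul_assoc, ← Matrix.star_eq_conjTranspose, hUU]
    conv_lhs => rw [hK.spectral_theorem]
    rfl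
  rw [key]
  refine posDef_conj _ _ ?_ hdetU
  rw [Matrix.posDef_diagonal_iff]
  intro i
  have : (0:ℝ) < c - hK.eigenvalues i := sub_pos.mpr (hc i)
  exact_mod_cast Complex.zero_lt_real.mpr this

end Complexify

end RAC

namespace RAC
open scoped ComplexOrder

section MapHelpers

variable {k l : ℕ}

lemma map_mul_c' {a b c : ℕ} (M : Matrix (Fin a) (Fin b) ℝ) (N : Matrix (Fin b) (Fin c) ℝ) :
    ((M * N).map Complex.ofReal) = (M.map Complex.ofReal) * (N.map Complex.ofReal) := by
  ext i j
  simp [Matrix.mul_apply, Matrix.map_apply]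

lemma map_add_c {a b : ℕ} (M N : Matrix (Fin a) (Fin b) ℝ) :
    ((M + N).map Complex.ofReal) = M.map Complex.ofReal + N.map Complex.ofReal := by
  ext i j; simp [Matrix.map_apply]

lemma map_sub_c {a b : ℕ} (M N : Matrix (Fin a) (Fin b) ℝ) :
    ((M - N).map Complex.ofReal) = M.map Complex.ofReal - N.map Complex.ofReal := by
  ext i j; simp [Matrix.map_apply]

lemma map_neg_c {a b : ℕ} (M : Matrix (Fin a) (Fin b) ℝ) :
    ((-M).map Complex.ofReal) = -(M.map Complex.ofReal) := by
  ext i j; simp [Matrix.map_apply]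

lemma map_smul_c {a b : ℕ} (r : ℝ) (M : Matrix (Fin a) (Fin b) ℝ) :
    ((r • M).map Complex.ofReal) = (r : ℂ) • (M.map Complex.ofReal) := by
  ext i j; simp [Matrix.map_apply]

lemma map_one_c {a : ℕ} :
    ((1 : Matrix (Fin a) (Fin a) ℝ).map Complex.ofReal) = 1 := by
  ext i j
  rcases eq_or_ne i j with h | h
  · subst h; simp [Matrix.one_apply_eq]
  · simp [Matrix.one_apply_ne h, h]

lemma map_zero_c {a b : ℕ} :
    ((0 : Matrix (Fin a) (Fin b) ℝ).map Complex.ofReal) = 0 := by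
  ext i j; simp

lemma map_transpose_conj_c {a b : ℕ} (M : Matrix (Fin a) (Fin b) ℝ) :
    (Mᵀ.map Complex.ofReal) = (M.map Complex.ofReal)ᴴ := by
  ext i j
  simp [Matrix.map_apply, Matrix.conjTranspose_apply, Complex.conj_ofReal]

end MapHelpers

lemma key_real (q a h X : ℝ) (hq : 0 < q) (hh : 0 ≤ h) (hha : h ≤ a)
    (hb : 3 * a < 4 * q) (hX : X ≠ 1)
    (heq : q * X ^ 2 + (2 * a - h - 2 * q) * X + (q - a) = 0) : -1 < X ∧ X < 1 := by
  constructor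
  · by_contra hc
    push_neg at hc
    nlinarith [sq_nonneg (X + 1),
      mul_nonneg (mul_nonneg hq.le (sq_nonneg (X+1))) (by linarith : (0:ℝ) ≤ -X)]
  · rcases lt_or_gt_of_ne hX with h1 | h1
    · exact h1
    · exfalso
      nlinarith [mul_pos (sub_pos.2 h1) (by nlinarith : (0:ℝ) < q * X - (q - a)),
        mul_nonneg (sub_nonneg.2 hha) (by linarith : (0:ℝ) ≤ X)]

lemma key_scalar (q a h : ℝ) (lam : ℂ) (hq : 0 < q) (hh : 0 ≤ h) (hha : h ≤ a)
    (hb : 3 * a < 4 * q) (hlam : lam ≠ 1)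
    (heq : (1 - lam) ^ 2 * (q : ℂ) = (1 - 2 * lam) * (a : ℂ) + lam * (h : ℂ)) :
    ‖lam‖ < 1 := by
  set X := lam.re with hXdef
  set Y := lam.im with hYdef
  have hre : q * X ^ 2 - q * Y ^ 2 + (2 * a - h - 2 * q) * X + (q - a) = 0 := by
    have := congrArg Complex.re heq
    simp [Complex.mul_re, Complex.mul_im, Complex.sub_re, Complex.sub_im, pow_two] at this
    ring_nf at this ⊢
    linarith [this]
  have him : Y * (2 * q * X + (2 * a - h - 2 * q)) = 0 := by
    have := congrArg Complex.im heq
    simp [Complex.mul_re, Complex.mul_im, pow_two] at this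
    ring_nf at this ⊢
    linarith [this]
  have hnorm : ‖lam‖ ^ 2 = X ^ 2 + Y ^ 2 := by
    rw [Complex.sq_norm, Complex.normSq_apply]; ring
  have hfin : X ^ 2 + Y ^ 2 < 1 := by
    rcases eq_or_ne Y 0 with hY | hY
    · have hX1 : X ≠ 1 := by
        intro hX1
        apply hlam
        apply Complex.ext <;> simp [← hXdef, ← hYdef, hX1, hY]
      have heq' : q * X ^ 2 + (2 * a - h - 2 * q) * X + (q - a) = 0 := by
        rw [hY] at hre; linarith [hre]
      obtain ⟨h1, h2⟩ := key_real q a h X hq hh hha hb hX1 heq'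
      rw [hY]
      nlinarith
    · have hXval : 2 * q * X + (2 * a - h - 2 * q) = 0 := by
        rcases mul_eq_zero.1 him with h' | h'
        · exact absurd h' hY
        · exact h'
      have hsum : q * (X ^ 2 + Y ^ 2) = q - a := by nlinarith [hre, hXval]
      have ha0 : 0 < a := by
        rcases lt_or_eq_of_le (hh.trans hha) with h' | h'
        · exact h'
        · exfalso
          have hh0 : h = 0 := le_antisymm (by rw [← h'] at hha; exact hha) hh
          have hX1 : X = 1 := by
            have hz : q * (X - 1) = 0 := by rw [hh0, ← h'] at hXval; linarith
            rcases mul_eq_zero.1 hz with hz | hz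
            · exact absurd hz hq.ne'
            · linarith
          rw [← h'] at hsum
          nlinarith [sq_abs Y, pow_pos (abs_pos.2 hY) 2]
      have : X ^ 2 + Y ^ 2 = (q - a) / q := by field_simp; linarith [hsum]
      rw [this, div_lt_one hq]
      linarith
  nlinarith [norm_nonneg lam, hnorm]

/-- Core spectral argument over ℂ. -/
lemma core {n m : ℕ} (Q S Hc : Matrix (Fin n) (Fin n) ℂ) (A : Matrix (Fin m) (Fin n) ℂ)
    (β : ℝ) (hβ : 0 < β)
    (hQpd : Q.PosDef) (hHpsd : Hc.PosSemidef)
    (hS : S = Hc + (β : ℂ) • (Aᴴ * A))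
    (hbound : ∀ x : Fin n → ℂ, x ≠ 0 →
      (star x ⬝ᵥ (S *ᵥ x)).re < 4 / 3 * (star x ⬝ᵥ (Q⁻¹ *ᵥ x)).re)
    (lam : ℂ) (hlam : lam ≠ 1) (x : Fin n → ℂ) (y : Fin m → ℂ)
    (hv : ¬(x = 0 ∧ y = 0))
    (e1 : x - Q *ᵥ (S *ᵥ x) + Q *ᵥ (Aᴴ *ᵥ y) = lam • x)
    (e2 : -((β : ℂ) • (A *ᵥ x)) + (β : ℂ) • (A *ᵥ (Q *ᵥ (S *ᵥ x))) + y
        - (β : ℂ) • (A *ᵥ (Q *ᵥ (Aᴴ *ᵥ y))) = lam • y) :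
    ‖lam‖ < 1 := by
  have hdet : IsUnit Q.det := hQpd.det_pos.ne'.isUnit
  have hQiQ : Q⁻¹ * Q = 1 := nonsing_inv_mul Q hdet
  have e1' : Q *ᵥ (S *ᵥ x - Aᴴ *ᵥ y) = (1 - lam) • x := by
    rw [mulVec_sub, sub_smul, one_smul, ← e1]
    abel
  have e2' : (lam * (β : ℂ)) • (A *ᵥ x) = (1 - lam) • y := by
    have hA1 : A *ᵥ x - A *ᵥ (Q *ᵥ (S *ᵥ x)) + A *ᵥ (Q *ᵥ (Aᴴ *ᵥ y)) = lam • (A *ᵥ x) := by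
      rw [← mulVec_smul, ← e1, mulVec_add, mulVec_sub]
    funext i
    have h1 := congrFun hA1 i
    have h2 := congrFun e2 i
    simp only [Pi.add_apply, Pi.sub_apply, Pi.neg_apply, Pi.smul_apply, smul_eq_mul] at h1 h2 ⊢
    linear_combination -h2 - (β : ℂ) * h1
  have h1lam : (1 : ℂ) - lam ≠ 0 := sub_ne_zero.2 (Ne.symm hlam)
  have hx : x ≠ 0 := by
    intro hx0
    apply hv
    refine ⟨hx0, ?_⟩
    have h' := e2'
    rw [hx0] at h'
    simp only [mulVec_zero, smul_zero] at h'
    rcases smul_eq_zero.1 h'.symm with h'' | h''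
    · exact absurd h'' h1lam
    · exact h''
  have hz : S *ᵥ x - Aᴴ *ᵥ y = (1 - lam) • (Q⁻¹ *ᵥ x) := by
    have h' := congrArg (fun w => Q⁻¹ *ᵥ w) e1'
    simpa only [mulVec_mulVec, hQiQ, one_mulVec, mulVec_smul] using h'
  set a : ℂ := star x ⬝ᵥ (S *ᵥ x) with ha_def
  set h : ℂ := star x ⬝ᵥ (Hc *ᵥ x) with hh_def
  set g : ℂ := star (A *ᵥ x) ⬝ᵥ (A *ᵥ x) with hg_def
  set q : ℂ := star x ⬝ᵥ (Q⁻¹ *ᵥ x) with hq_def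
  have hahg : a = h + (β : ℂ) * g := by
    rw [ha_def, hS, add_mulVec, dotProduct_add, smul_mulVec, dotProduct_smul, hh_def,
      hg_def, star_mulVec, ← dotProduct_mulVec, mulVec_mulVec]
    rfl
  have hsx : a - star (A *ᵥ x) ⬝ᵥ y = (1 - lam) * q := by
    have h' := congrArg (fun w => star x ⬝ᵥ w) hz
    simpa only [dotProduct_sub, dotProduct_smul, smul_eq_mul, star_mulVec, dotProduct_mulVec,
      ha_def, hq_def] using h'
  have hsy : (1 - lam) * (star (A *ᵥ x) ⬝ᵥ y) = lam * (β : ℂ) * g := by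
    have h' := congrArg (fun w => star (A *ᵥ x) ⬝ᵥ w) e2'
    simpa only [dotProduct_smul, smul_eq_mul, hg_def] using h'.symm
  have heq : (1 - lam) ^ 2 * q = (1 - 2 * lam) * a + lam * h := by
    have h3 : (1 - lam) * (a - star (A *ᵥ x) ⬝ᵥ y) = (1 - lam) * ((1 - lam) * q) := by
      rw [hsx]
    have hbg : (β : ℂ) * g = a - h := by linear_combination -hahg
    linear_combination -h3 - hsy - lam * hbg
  have hh0 : 0 ≤ h := hHpsd.dotProduct_mulVec_nonneg x
  have hg0 : 0 ≤ g := dotProduct_star_self_nonneg _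
  have hq0 : 0 < q := hQpd.inv.dotProduct_mulVec_pos hx
  rw [Complex.le_def] at hh0 hg0
  rw [Complex.lt_def] at hq0
  have hhim : h.im = 0 := hh0.2.symm
  have hgim : g.im = 0 := hg0.2.symm
  have hqim : q.im = 0 := hq0.2.symm
  have haim : a.im = 0 := by
    rw [hahg]
    simp [hhim, hgim, Complex.add_im, Complex.mul_im]
  have hare : h.re ≤ a.re := by
    have h4 : a.re = h.re + β * g.re := by
      rw [hahg]; simp [Complex.add_re, Complex.mul_re, hgim]
    have hgre : (0:ℝ) ≤ g.re := by simpa using hg0.1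
    rw [h4]
    nlinarith [mul_nonneg hβ.le hgre]
  have hbnd := hbound x hx
  rw [← ha_def, ← hq_def] at hbnd
  have hqre : (0:ℝ) < q.re := by simpa using hq0.1
  have hhre : (0:ℝ) ≤ h.re := by simpa using hh0.1
  have hqc : (q.re : ℂ) = q := Complex.ext rfl (by simp [hqim])
  have hac : (a.re : ℂ) = a := Complex.ext rfl (by simp [haim])
  have hhc : (h.re : ℂ) = h := Complex.ext rfl (by simp [hhim])
  exact key_scalar q.re a.re h.re lam hqre hhre hare (by linarith) hlam
    (by rw [hqc, hac, hhc]; exact heq)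

end RAC

namespace RAC
open scoped ComplexOrder

open scoped MatrixOrder in
/-- The quadratic-form bound coming from the eigenvalue hypothesis on `QS`. -/
lemma bound_lemma {n m p s : ℕ} (H : Matrix (Fin n) (Fin n) ℝ) (A : Matrix (Fin m) (Fin n) ℝ)
    (β : ℝ) (hH : H.PosSemidef) (hβ : 0 < β) (hA1 : Assumption1 H A β s)
    (hcard : 0 < Fintype.card (UpdateOrder n p s))
    (hQS : ∀ lam : ℂ,
      HasEigen (((Qmat n m p s H A β * Smat H A β).map Complex.ofReal)) lam →
      lam.im = 0 ∧ 0 ≤ lam.re ∧ lam.re < 4 / 3) :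
    ∀ xx : Fin n → ℂ, xx ≠ 0 →
      (star xx ⬝ᵥ (((Smat H A β).map Complex.ofReal) *ᵥ xx)).re
        < 4 / 3 * (star xx ⬝ᵥ ((((Qmat n m p s H A β).map Complex.ofReal))⁻¹ *ᵥ xx)).re := by
  set Qc : Matrix (Fin n) (Fin n) ℂ := (Qmat n m p s H A β).map Complex.ofReal with hQc
  set Sc : Matrix (Fin n) (Fin n) ℂ := (Smat H A β).map Complex.ofReal with hSc
  have hQpd : Qc.PosDef := posDef_map_c (Qmat_posDef H A β hH hβ hA1 hcard)
  have hQpsd : Qc.PosSemidef := hQpd.posSemidef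
  set R : Matrix (Fin n) (Fin n) ℂ := CFC.sqrt Qc with hRdef
  have hRpsd : R.PosSemidef := (CFC.sqrt_nonneg Qc).posSemidef
  have hRH : Rᴴ = R := hRpsd.1
  have hRR : R * R = Qc := CFC.sqrt_mul_sqrt_self Qc hQpsd.nonneg
  have hdetQ : IsUnit Qc.det := hQpd.det_pos.ne'.isUnit
  have hdetR : IsUnit R.det := by
    have hRRdet : R.det * R.det = Qc.det := by rw [← Matrix.det_mul, hRR]
    exact isUnit_of_mul_isUnit_left (hRRdet ▸ hdetQ)
  have hScH : Sc.IsHermitian := (posSemidef_map_c (Smat_posSemidef H A β hH hβ)).1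
  set K : Matrix (Fin n) (Fin n) ℂ := R * Sc * R with hK
  have hKH : K.IsHermitian := by
    have h' := Matrix.isHermitian_conjTranspose_mul_mul R hScH
    rwa [hRH] at h'
  have hRinj : Function.Injective R.mulVec :=
    Matrix.mulVec_injective_iff_isUnit.mpr (isUnit_iff_isUnit_det _ |>.mpr hdetR)
  have heig : ∀ i, hKH.eigenvalues i < 4 / 3 := by
    intro i
    set μ : ℝ := hKH.eigenvalues i with hμ
    set vb : Fin n → ℂ := ⇑(hKH.eigenvectorBasis i) with hvb
    have hvec : K *ᵥ vb = μ • vb := hKH.mulVec_eigenvectorBasis i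
    have hvb0 : vb ≠ 0 := by
      intro hc
      apply hKH.eigenvectorBasis.orthonormal.ne_zero i
      ext j
      exact congrFun hc j
    have hu0 : R *ᵥ vb ≠ 0 := fun h0 => hvb0 (hRinj (by simpa using h0))
    have heigen : HasEigen ((Qmat n m p s H A β * Smat H A β).map Complex.ofReal) ((μ : ℝ) : ℂ) := by
      refine ⟨R *ᵥ vb, hu0, ?_⟩
      rw [map_mul_c', ← hQc, ← hSc]
      have hcomm : Qc * Sc * R = R * K := by
        rw [hK, ← hRR]
        simp only [Matrix.mul_assoc]
      rw [mulVec_mulVec, hcomm, ← mulVec_mulVec, hvec]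
      funext j
      simp [Complex.real_smul, mulVec_smul]
    obtain ⟨_, _, h43⟩ := hQS _ heigen
    simpa using h43
  have hQcH' : Qcᴴ = Qc := hQpd.1
  have hPD := smul_one_sub_posDef K hKH (4 / 3) heig
  have conj_form : ∀ (B M : Matrix (Fin n) (Fin n) ℂ), Bᴴ = B → ∀ z : Fin n → ℂ,
      star (B *ᵥ z) ⬝ᵥ (M *ᵥ (B *ᵥ z)) = star z ⬝ᵥ ((B * M * B) *ᵥ z) := by
    intro B M hB z
    rw [star_mulVec, hB, ← dotProduct_mulVec, mulVec_mulVec, mulVec_mulVec]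
  intro xx hxx
  obtain ⟨w, hxw⟩ : ∃ w, Qc *ᵥ w = xx :=
    ⟨Qc⁻¹ *ᵥ xx, by rw [mulVec_mulVec, mul_nonsing_inv _ hdetQ, one_mulVec]⟩
  have hwdef : Qc⁻¹ *ᵥ xx = w := by
    rw [← hxw, mulVec_mulVec, nonsing_inv_mul _ hdetQ, one_mulVec]
  rw [hwdef]
  have hw0 : w ≠ 0 := by
    intro h0
    rw [h0, mulVec_zero] at hxw
    exact hxx hxw.symm
  have hu0 : R *ᵥ w ≠ 0 := fun h0 => hw0 (hRinj (by simpa using h0))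
  have I1 : star xx ⬝ᵥ (Sc *ᵥ xx) = star (R *ᵥ w) ⬝ᵥ (K *ᵥ (R *ᵥ w)) := by
    conv_lhs => rw [← hxw]
    rw [conj_form Qc Sc hQcH' w, conj_form R K hRH w]
    congr 1
    rw [hK, ← hRR]
    simp only [Matrix.mul_assoc]
  have I2 : star xx ⬝ᵥ w = star (R *ᵥ w) ⬝ᵥ (R *ᵥ w) := by
    conv_lhs => rw [← hxw]
    rw [star_mulVec, hQcH', ← dotProduct_mulVec]
    rw [star_mulVec, hRH, ← dotProduct_mulVec, mulVec_mulVec, hRR]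
  have hp := hPD.dotProduct_mulVec_pos hu0
  have hexp : star (R *ᵥ w) ⬝ᵥ ((((4 / 3 : ℝ) : ℂ) • (1 : Matrix (Fin n) (Fin n) ℂ) - K)
        *ᵥ (R *ᵥ w))
      = ((4 / 3 : ℝ) : ℂ) * (star (R *ᵥ w) ⬝ᵥ (R *ᵥ w)) - star (R *ᵥ w) ⬝ᵥ (K *ᵥ (R *ᵥ w)) := by
    rw [sub_mulVec, dotProduct_sub, smul_mulVec, one_mulVec, dotProduct_smul, smul_eq_mul]
  rw [hexp, Complex.lt_def] at hp
  have hre := hp.1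
  simp only [Complex.zero_re, Complex.sub_re, Complex.mul_re, Complex.ofReal_re,
    Complex.ofReal_im, zero_mul, sub_zero] at hre
  rw [I1, I2]
  linarith

end RAC
open scoped ComplexOrder


/-- Under Assumption 1, if every eigenvalue of `QS` is real and lies in
`[0, 4/3)`, then every complex eigenvalue `λ` of the expected mapping matrix `M`
satisfies `|λ| < 1` or `λ = 1`. -/
theorem eig_Mexp_lt_one_or_eq_one
    (n m p s : ℕ) (hp : 0 < p) (hs : 0 < s) (hn : n = p * s)
    (H : Matrix (Fin n) (Fin n) ℝ) (hH : H.PosSemidef)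
    (A : Matrix (Fin m) (Fin n) ℝ) (β : ℝ) (hβ : 0 < β)
    (hA1 : Assumption1 H A β s)
    (hQS : ∀ lam : ℂ,
      HasEigen (((Qmat n m p s H A β * Smat H A β).map Complex.ofReal)) lam →
      lam.im = 0 ∧ 0 ≤ lam.re ∧ lam.re < 4 / 3) :
    ∀ lam : ℂ,
      HasEigen (((Mexp n m p s H A β).map Complex.ofReal)) lam →
      ‖lam‖ < 1 ∨ lam = 1 := by
  intro lam hEig
  by_cases hlam1 : lam = 1
  · exact Or.inr hlam1
  refine Or.inl ?_
  obtain ⟨v, hv0, hMv⟩ := hEig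
  set Qc : Matrix (Fin n) (Fin n) ℂ := (Qmat n m p s H A β).map Complex.ofReal with hQc
  set Sc : Matrix (Fin n) (Fin n) ℂ := (Smat H A β).map Complex.ofReal with hSc
  set Hc : Matrix (Fin n) (Fin n) ℂ := H.map Complex.ofReal with hHc
  set Ac : Matrix (Fin m) (Fin n) ℂ := A.map Complex.ofReal with hAc
  have hMexp : (Mexp n m p s H A β).map Complex.ofReal =
      Matrix.fromBlocks (1 - Qc * Sc) (Qc * Acᴴ)
        (-((β : ℂ) • Ac) + (β : ℂ) • (Ac * (Qc * Sc)))
        (1 - (β : ℂ) • (Ac * (Qc * Acᴴ))) := by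
    unfold Mexp
    rw [Matrix.fromBlocks_map]
    simp only [map_sub_c, map_add_c, map_neg_c, map_smul_c, map_mul_c',
      map_transpose_conj_c, map_one_c]
    rfl
  rw [hMexp, Matrix.fromBlocks_mulVec] at hMv
  set x : Fin n → ℂ := v ∘ Sum.inl with hx
  set y : Fin m → ℂ := v ∘ Sum.inr with hy
  have e1 : (1 - Qc * Sc) *ᵥ x + (Qc * Acᴴ) *ᵥ y = lam • x := by
    funext i
    have h' := congrFun hMv (Sum.inl i)
    simpa [hx] using h'
  have e2 : (-((β : ℂ) • Ac) + (β : ℂ) • (Ac * (Qc * Sc))) *ᵥ x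
      + (1 - (β : ℂ) • (Ac * (Qc * Acᴴ))) *ᵥ y = lam • y := by
    funext i
    have h' := congrFun hMv (Sum.inr i)
    simpa [hy] using h'
  have hvne : ¬(x = 0 ∧ y = 0) := by
    rintro ⟨hx0, hy0⟩
    apply hv0
    funext z
    cases z with
    | inl i => exact congrFun hx0 i
    | inr i => exact congrFun hy0 i
  have e1c : x - Qc *ᵥ (Sc *ᵥ x) + Qc *ᵥ (Acᴴ *ᵥ y) = lam • x := by
    simp only [sub_mulVec, one_mulVec, mulVec_mulVec, Matrix.mul_assoc] at e1 ⊢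
    exact e1
  have e2c : -((β : ℂ) • (Ac *ᵥ x)) + (β : ℂ) • (Ac *ᵥ (Qc *ᵥ (Sc *ᵥ x))) + y
      - (β : ℂ) • (Ac *ᵥ (Qc *ᵥ (Acᴴ *ᵥ y))) = lam • y := by
    simp only [add_mulVec, sub_mulVec, neg_mulVec, one_mulVec, smul_mulVec,
      mulVec_mulVec, Matrix.mul_assoc] at e2 ⊢
    funext i
    have h' := congrFun e2 i
    simp only [Pi.add_apply, Pi.sub_apply, Pi.neg_apply, Pi.smul_apply, smul_eq_mul] at h' ⊢
    linear_combination h'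
  rcases Nat.eq_zero_or_pos (Fintype.card (UpdateOrder n p s)) with hcard | hcard
  · exfalso
    have hQ0 : Qmat n m p s H A β = 0 := by
      unfold Qmat
      have hc0 : (Fintype.card (UpdateOrder n p s) : ℝ) = 0 := by exact_mod_cast hcard
      rw [hc0, _root_.inv_zero, zero_smul]
    have hQc0 : Qc = 0 := by rw [hQc, hQ0]; exact map_zero_c
    rw [hQc0] at e1c e2c
    simp only [Matrix.zero_mulVec, mulVec_zero, sub_zero, add_zero, smul_zero] at e1c e2c
    have hx0 : x = 0 := by
      by_contra hx0
      have hsm : (lam - 1) • x = 0 := by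
        rw [sub_smul, one_smul, ← e1c, sub_self]
      rcases smul_eq_zero.1 hsm with h' | h'
      · exact hlam1 (by rwa [sub_eq_zero] at h')
      · exact hx0 h'
    rw [hx0] at e2c
    simp only [mulVec_zero, smul_zero, neg_zero, zero_add, add_zero, zero_sub, sub_zero] at e2c
    have hy0 : y = 0 := by
      by_contra hy0
      have hsm : (lam - 1) • y = 0 := by
        rw [sub_smul, one_smul, ← e2c, sub_self]
      rcases smul_eq_zero.1 hsm with h' | h'
      · exact hlam1 (by rwa [sub_eq_zero] at h')
      · exact hy0 h'
    exact hvne ⟨hx0, hy0⟩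
  · have hQpd : Qc.PosDef := posDef_map_c (Qmat_posDef H A β hH hβ hA1 hcard)
    have hHpsd : Hc.PosSemidef := posSemidef_map_c hH
    have hSdec : Sc = Hc + (β : ℂ) • (Acᴴ * Ac) := by
      rw [hSc]
      unfold Smat
      rw [map_add_c, map_smul_c, map_mul_c', map_transpose_conj_c]
    have hbound := bound_lemma H A β hH hβ hA1 hcard hQS
    exact core Qc Sc Hc Ac β hβ hQpd hHpsd hSdec hbound lam hlam1 x y hvne e1c e2c
end

section
/- Suppose Assumption 1 holds and that every eigenvalue of QS is real and lies in [0, 4/3). If 1 is an eigenvalue of the expected mapping matrix M, then the eigenvalue 1 has a complete set of eigenvectors, i.e., its geometric multiplicity equals its algebraic multiplicity. -/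
open Matrix Filter Topology MeasureTheory ProbabilityTheory Kronecker

open RAC Matrix

section AuxRACProof

open Finset Polynomial

namespace RACAux

/-! ### Generic linear-algebra helpers -/

lemma sum_mulVec {ι κ κ' : Type*} [Fintype ι] [Fintype κ'] (M : ι → Matrix κ κ' ℝ)
    (w : κ' → ℝ) : (∑ i, M i) *ᵥ w = ∑ i, (M i) *ᵥ w := by
  funext a
  simp only [Matrix.mulVec, dotProduct, Finset.sum_apply, Matrix.sum_apply,
    Finset.sum_mul]
  exact Finset.sum_comm

lemma dotProduct_sum {ι κ : Type*} [Fintype ι] [Fintype κ] (w : κ → ℝ) (v : ι → κ → ℝ) :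
    w ⬝ᵥ (∑ i, v i) = ∑ i, w ⬝ᵥ v i := by
  simp only [dotProduct, Finset.sum_apply, Finset.mul_sum]
  exact Finset.sum_comm

lemma mulVec_dot {κ κ' : Type*} [Fintype κ] [Fintype κ'] (M : Matrix κ κ' ℝ)
    (x : κ' → ℝ) (w : κ → ℝ) : (M *ᵥ x) ⬝ᵥ w = x ⬝ᵥ (Mᵀ *ᵥ w) := by
  rw [Matrix.dotProduct_mulVec, Matrix.vecMul_transpose]

lemma dot_transpose_mulVec {κ κ' : Type*} [Fintype κ] [Fintype κ']
    (M : Matrix κ κ' ℝ) (x : κ' → ℝ) (w : κ → ℝ) :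
    x ⬝ᵥ (Mᵀ *ᵥ w) = (M *ᵥ x) ⬝ᵥ w := (mulVec_dot M x w).symm

variable {n m p s : ℕ} {H : Matrix (Fin n) (Fin n) ℝ} {A : Matrix (Fin m) (Fin n) ℝ}
  {β : ℝ}

/-! ### Facts about `S` -/

lemma Smat_sym (hH : H.PosSemidef) : (Smat H A β)ᵀ = Smat H A β := by
  have h1 : Hᵀ = H := by
    have h : Hᴴ = H := hH.1
    rwa [Matrix.conjTranspose_eq_transpose_of_trivial] at h
  unfold Smat
  rw [Matrix.transpose_add, Matrix.transpose_smul, Matrix.transpose_mul,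
    Matrix.transpose_transpose, h1]

lemma dot_AtA (x : Fin n → ℝ) : x ⬝ᵥ ((Aᵀ * A) *ᵥ x) = (A *ᵥ x) ⬝ᵥ (A *ᵥ x) := by
  rw [← Matrix.mulVec_mulVec, Matrix.dotProduct_mulVec, Matrix.vecMul_transpose]

lemma qfS_nonneg (hH : H.PosSemidef) (hβ : 0 < β) (x : Fin n → ℝ) :
    0 ≤ x ⬝ᵥ (Smat H A β *ᵥ x) := by
  unfold Smat
  rw [Matrix.add_mulVec, dotProduct_add, Matrix.smul_mulVec,
    dotProduct_smul, dot_AtA, smul_eq_mul]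
  have h1 := hH.dotProduct_mulVec_nonneg x
  rw [star_trivial] at h1
  have h2 : (0:ℝ) ≤ (A *ᵥ x) ⬝ᵥ (A *ᵥ x) :=
    Finset.sum_nonneg fun i _ => mul_self_nonneg _
  nlinarith

lemma Smat_posSemidef (hH : H.PosSemidef) (hβ : 0 < β) : (Smat H A β).PosSemidef := by
  refine Matrix.PosSemidef.of_dotProduct_mulVec_nonneg ?_ ?_
  · show (Smat H A β)ᴴ = Smat H A β
    rw [Matrix.conjTranspose_eq_transpose_of_trivial]
    exact Smat_sym hH
  · intro x
    rw [star_trivial]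
    exact qfS_nonneg hH hβ x

lemma S_dot_zero (hH : H.PosSemidef) (hβ : 0 < β) {x : Fin n → ℝ}
    (h : x ⬝ᵥ (Smat H A β *ᵥ x) = 0) : Smat H A β *ᵥ x = 0 := by
  refine ((Smat_posSemidef hH hβ).dotProduct_mulVec_zero_iff x).mp ?_
  rwa [star_trivial]

lemma AtA_zero {x : Fin n → ℝ} (h : Aᵀ *ᵥ (A *ᵥ x) = 0) : A *ᵥ x = 0 := by
  have h1 : x ⬝ᵥ (Aᵀ *ᵥ (A *ᵥ x)) = 0 := by rw [h, dotProduct_zero]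
  rw [Matrix.dotProduct_mulVec, Matrix.vecMul_transpose] at h1
  exact dotProduct_self_eq_zero.mp h1

/-! ### The block-diagonal part `D` and facts about `L` -/

/-- The block-diagonal part of `S` relative to the partition `σ`. -/
def Dmat (H : Matrix (Fin n) (Fin n) ℝ) (A : Matrix (Fin m) (Fin n) ℝ) (β : ℝ)
    (σ : Fin n → Fin p) : Matrix (Fin n) (Fin n) ℝ :=
  Matrix.of fun a b => if σ a = σ b then Smat H A β a b else 0

lemma L_add_transpose (hH : H.PosSemidef) (σ : Fin n → Fin p) :
    Lmat H A β σ + (Lmat H A β σ)ᵀ = Smat H A β + Dmat H A β σ := by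
  have hsym : ∀ a b, Smat H A β b a = Smat H A β a b := fun a b => by
    simpa [Matrix.transpose_apply] using congrFun (congrFun (Smat_sym (A := A) (β := β) hH) a) b
  ext a b
  simp only [Matrix.add_apply, Matrix.transpose_apply, Lmat, Dmat, Matrix.of_apply]
  rcases lt_trichotomy (σ a) (σ b) with h | h | h
  · rw [if_neg (not_le.mpr h), if_pos h.le, if_neg h.ne, hsym, zero_add, add_zero]
  · rw [if_pos h.ge, if_pos h.le, if_pos h, hsym]
  · rw [if_pos h.le, if_neg (not_le.mpr h), if_neg (Ne.symm h.ne), add_zero]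

lemma qfD_pos (hA1 : Assumption1 H A β s) {σ : Fin n → Fin p}
    (hσ : IsUpdateOrder n p s σ) {x : Fin n → ℝ} (hx : x ≠ 0) :
    0 < x ⬝ᵥ (Dmat H A β σ *ᵥ x) := by
  classical
  set S := Smat H A β with hS
  -- expand the quadratic form
  have expand : x ⬝ᵥ (Dmat H A β σ *ᵥ x)
      = ∑ a, x a * ∑ b ∈ Finset.univ.filter (fun b => σ b = σ a), S a b * x b := by
    simp only [dotProduct, Matrix.mulVec, Dmat, Matrix.of_apply]
    refine Finset.sum_congr rfl fun a _ => ?_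
    congr 1
    rw [Finset.sum_filter]
    refine Finset.sum_congr rfl fun b _ => ?_
    by_cases h : σ a = σ b
    · rw [if_pos h, if_pos h.symm]
    · rw [if_neg h, if_neg (fun h' => h h'.symm), zero_mul]
  have grouped : x ⬝ᵥ (Dmat H A β σ *ᵥ x)
      = ∑ j : Fin p, ∑ a ∈ Finset.univ.filter (fun a => σ a = j),
          x a * ∑ b ∈ Finset.univ.filter (fun b => σ b = j), S a b * x b := by
    rw [expand,
      ← Finset.sum_fiberwise_of_maps_to (g := σ) (fun a _ => Finset.mem_univ (σ a))
        (fun a => x a * ∑ b ∈ Finset.univ.filter (fun b => σ b = σ a), S a b * x b)]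
    refine Finset.sum_congr rfl fun j _ => Finset.sum_congr rfl fun a ha => ?_
    rw [(Finset.mem_filter.mp ha).2]
  rw [grouped]
  -- each fiber sum is the quadratic form of a positive definite submatrix
  have key : ∀ j : Fin p, ∀ y : Fin n → ℝ,
      (∑ a ∈ Finset.univ.filter (fun a => σ a = j),
        y a * ∑ b ∈ Finset.univ.filter (fun b => σ b = j), S a b * y b)
      = (fun a : (Finset.univ.filter (fun a => σ a = j) : Finset (Fin n)) => y (a : Fin n)) ⬝ᵥ
        ((S.submatrix
            (fun a : (Finset.univ.filter (fun a => σ a = j) : Finset (Fin n)) => (a : Fin n))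
            (fun a : (Finset.univ.filter (fun a => σ a = j) : Finset (Fin n)) => (a : Fin n)))
          *ᵥ (fun b => y (b : Fin n))) := by
    intro j y
    rw [dotProduct]
    rw [← Finset.sum_coe_sort (Finset.univ.filter (fun a => σ a = j))
      (fun a => y a * ∑ b ∈ Finset.univ.filter (fun b => σ b = j), S a b * y b)]
    refine Finset.sum_congr rfl fun a _ => ?_
    congr 1
    rw [Matrix.mulVec, dotProduct,
      ← Finset.sum_coe_sort (Finset.univ.filter (fun b => σ b = j))
        (fun b => S (a : Fin n) b * y b)]
    rfl
  -- positivity data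
  have hPD : ∀ j : Fin p, Matrix.PosDef (S.submatrix
      (fun a : (Finset.univ.filter (fun a => σ a = j) : Finset (Fin n)) => (a : Fin n))
      (fun a : (Finset.univ.filter (fun a => σ a = j) : Finset (Fin n)) => (a : Fin n))) :=
    fun j => hA1 _ (hσ j)
  obtain ⟨a₀, ha₀⟩ : ∃ a, x a ≠ 0 := by
    by_contra hcon
    push_neg at hcon
    exact hx (funext hcon)
  refine Finset.sum_pos' (fun j _ => ?_) ⟨σ a₀, Finset.mem_univ _, ?_⟩
  · rw [key j x]
    have h := (hPD j).posSemidef.dotProduct_mulVec_nonneg (fun a => x (a : Fin n))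
    rwa [star_trivial] at h
  · rw [key (σ a₀) x]
    have hmem : a₀ ∈ Finset.univ.filter (fun a => σ a = σ a₀) :=
      Finset.mem_filter.mpr ⟨Finset.mem_univ _, rfl⟩
    have hy : (fun a : (Finset.univ.filter (fun a => σ a = σ a₀) : Finset (Fin n)) =>
        x (a : Fin n)) ≠ 0 := by
      intro hcon
      exact ha₀ (congrFun hcon ⟨a₀, hmem⟩)
    have h := (hPD (σ a₀)).dotProduct_mulVec_pos hy
    rwa [star_trivial] at h

lemma qfLL_pos (hH : H.PosSemidef) (hβ : 0 < β) (hA1 : Assumption1 H A β s)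
    {σ : Fin n → Fin p} (hσ : IsUpdateOrder n p s σ) {x : Fin n → ℝ} (hx : x ≠ 0) :
    0 < x ⬝ᵥ ((Lmat H A β σ + (Lmat H A β σ)ᵀ) *ᵥ x) := by
  rw [L_add_transpose hH, Matrix.add_mulVec, dotProduct_add]
  exact add_pos_of_nonneg_of_pos (qfS_nonneg hH hβ x) (qfD_pos hA1 hσ hx)

lemma L_mulVec_eq_zero (hH : H.PosSemidef) (hβ : 0 < β) (hA1 : Assumption1 H A β s)
    {σ : Fin n → Fin p} (hσ : IsUpdateOrder n p s σ) {w : Fin n → ℝ}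
    (h : Lmat H A β σ *ᵥ w = 0) : w = 0 := by
  by_contra hw
  have h1 := qfLL_pos hH hβ hA1 hσ hw
  rw [Matrix.add_mulVec, h, zero_add, Matrix.dotProduct_mulVec,
    Matrix.vecMul_transpose, h, zero_dotProduct] at h1
  exact lt_irrefl _ h1

lemma L_det_isUnit (hH : H.PosSemidef) (hβ : 0 < β) (hA1 : Assumption1 H A β s)
    {σ : Fin n → Fin p} (hσ : IsUpdateOrder n p s σ) :
    IsUnit (Lmat H A β σ).det := by
  rw [isUnit_iff_ne_zero]
  intro h0
  obtain ⟨v, hv, hLv⟩ := Matrix.exists_mulVec_eq_zero_iff.mpr h0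
  exact hv (L_mulVec_eq_zero hH hβ hA1 hσ hLv)

lemma qfLinv_pos (hH : H.PosSemidef) (hβ : 0 < β) (hA1 : Assumption1 H A β s)
    {σ : Fin n → Fin p} (hσ : IsUpdateOrder n p s σ) {w : Fin n → ℝ} (hw : w ≠ 0) :
    0 < w ⬝ᵥ ((Lmat H A β σ)⁻¹ *ᵥ w) := by
  set L := Lmat H A β σ with hL
  have hdet : IsUnit L.det := L_det_isUnit hH hβ hA1 hσ
  set z := L⁻¹ *ᵥ w with hz
  have hwz : L *ᵥ z = w := by
    rw [hz, Matrix.mulVec_mulVec, Matrix.mul_nonsing_inv _ hdet, Matrix.one_mulVec]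
  have hz0 : z ≠ 0 := by
    intro h
    exact hw (by rw [← hwz, h, Matrix.mulVec_zero])
  have h2 : w ⬝ᵥ z = z ⬝ᵥ (L *ᵥ z) := by
    conv_lhs => rw [← hwz]
    rw [dotProduct_comm]
  have h4 := qfLL_pos hH hβ hA1 hσ hz0
  have h5 : z ⬝ᵥ ((L + Lᵀ) *ᵥ z) = z ⬝ᵥ (L *ᵥ z) + z ⬝ᵥ (L *ᵥ z) := by
    rw [Matrix.add_mulVec, dotProduct_add]
    congr 1
    rw [Matrix.dotProduct_mulVec, Matrix.vecMul_transpose, dotProduct_comm]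
  rw [h5] at h4
  show 0 < w ⬝ᵥ z
  rw [h2]
  linarith

/-! ### Existence of update orders -/

lemma updateOrder_nonempty (hp : 0 < p) (hs : 0 < s) (hn : n = p * s) :
    Nonempty (UpdateOrder n p s) := by
  refine ⟨⟨fun a => (finProdFinEquiv.symm (Fin.cast hn a)).1, fun i => ?_⟩⟩
  rw [← Fintype.card_subtype]
  have e : {a : Fin n // (finProdFinEquiv.symm (Fin.cast hn a)).1 = i} ≃ Fin s :=
    { toFun := fun a => (finProdFinEquiv.symm (Fin.cast hn a.1)).2
      invFun := fun j => ⟨Fin.cast hn.symm (finProdFinEquiv (i, j)), by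
        have hcast : Fin.cast hn (Fin.cast hn.symm (finProdFinEquiv (i, j)))
            = finProdFinEquiv (i, j) := by
          apply Fin.ext; simp [Fin.coe_cast]
        rw [hcast, Equiv.symm_apply_apply]⟩
      left_inv := fun a => by
        apply Subtype.ext
        apply Fin.ext
        have h2 : ((i, (finProdFinEquiv.symm (Fin.cast hn a.1)).2) : Fin p × Fin s)
            = finProdFinEquiv.symm (Fin.cast hn a.1) := Prod.ext a.2.symm rfl
        show ((Fin.cast hn.symm (finProdFinEquiv
            (i, (finProdFinEquiv.symm (Fin.cast hn a.1)).2)) : Fin n) : ℕ) = (a.1 : ℕ)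
        rw [h2, Equiv.apply_symm_apply]
        simp [Fin.coe_cast]
      right_inv := fun j => by
        have hcast : Fin.cast hn (Fin.cast hn.symm (finProdFinEquiv (i, j)))
            = finProdFinEquiv (i, j) := by
          apply Fin.ext; simp [Fin.coe_cast]
        show (finProdFinEquiv.symm (Fin.cast hn (Fin.cast hn.symm
            (finProdFinEquiv (i, j))))).2 = j
        rw [hcast, Equiv.symm_apply_apply] }
  rw [Fintype.card_congr e, Fintype.card_fin]

/-! ### Facts about `Q` -/

lemma qfQ_pos (hp : 0 < p) (hs : 0 < s) (hn : n = p * s) (hH : H.PosSemidef)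
    (hβ : 0 < β) (hA1 : Assumption1 H A β s) {w : Fin n → ℝ} (hw : w ≠ 0) :
    0 < w ⬝ᵥ (Qmat n m p s H A β *ᵥ w) := by
  have hne : Nonempty (UpdateOrder n p s) := updateOrder_nonempty hp hs hn
  have hcard : (0:ℝ) < (Fintype.card (UpdateOrder n p s) : ℝ) := by
    exact_mod_cast Fintype.card_pos
  unfold Qmat
  rw [Matrix.smul_mulVec, dotProduct_smul, smul_eq_mul]
  refine mul_pos (inv_pos.mpr hcard) ?_
  rw [sum_mulVec, dotProduct_sum]
  exact Finset.sum_pos (fun σ _ => qfLinv_pos hH hβ hA1 σ.2 hw) Finset.univ_nonempty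

lemma Q_dot_zero (hp : 0 < p) (hs : 0 < s) (hn : n = p * s) (hH : H.PosSemidef)
    (hβ : 0 < β) (hA1 : Assumption1 H A β s) {w : Fin n → ℝ}
    (h : w ⬝ᵥ (Qmat n m p s H A β *ᵥ w) = 0) : w = 0 := by
  by_contra hw
  exact absurd h (ne_of_gt (qfQ_pos hp hs hn hH hβ hA1 hw))

lemma Q_mulVec_zero (hp : 0 < p) (hs : 0 < s) (hn : n = p * s) (hH : H.PosSemidef)
    (hβ : 0 < β) (hA1 : Assumption1 H A β s) {w : Fin n → ℝ}
    (h : Qmat n m p s H A β *ᵥ w = 0) : w = 0 := by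
  refine Q_dot_zero hp hs hn hH hβ hA1 ?_
  rw [h, dotProduct_zero]

/-! ### The block structure of `M − 1` -/

lemma elim_sub_elim {a c : Fin n → ℝ} {b d : Fin m → ℝ} :
    (Sum.elim a b - Sum.elim c d) = Sum.elim (a - c) (b - d) := by
  funext i; cases i <;> rfl

lemma elim_zero_zero : (Sum.elim (0 : Fin n → ℝ) (0 : Fin m → ℝ)) = 0 := by
  funext i; cases i <;> rfl

lemma Nmul (x : Fin n → ℝ) (y : Fin m → ℝ) :
    (Mexp n m p s H A β - 1) *ᵥ Sum.elim x y
      = Sum.elim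
          (-(Qmat n m p s H A β *ᵥ (Smat H A β *ᵥ x - Aᵀ *ᵥ y)))
          (β • (A *ᵥ (Qmat n m p s H A β *ᵥ (Smat H A β *ᵥ x - Aᵀ *ᵥ y)))
            - β • (A *ᵥ x)) := by
  set Q := Qmat n m p s H A β with hQ
  set S := Smat H A β with hS
  rw [Matrix.sub_mulVec, Matrix.one_mulVec]
  show (Matrix.fromBlocks (1 - Q * S) (Q * Aᵀ)
      (-(β • A) + β • (A * (Q * S))) (1 - β • (A * (Q * Aᵀ)))) *ᵥ Sum.elim x y
      - Sum.elim x y = _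
  rw [Matrix.fromBlocks_mulVec, Sum.elim_comp_inl, Sum.elim_comp_inr, elim_sub_elim]
  refine congrArg₂ Sum.elim ?_ ?_
  · rw [Matrix.sub_mulVec, Matrix.one_mulVec, ← Matrix.mulVec_mulVec x Q S,
      ← Matrix.mulVec_mulVec y Q Aᵀ, Matrix.mulVec_sub]
    abel
  · rw [Matrix.add_mulVec, Matrix.sub_mulVec, Matrix.one_mulVec, Matrix.neg_mulVec,
      Matrix.smul_mulVec, Matrix.smul_mulVec, Matrix.smul_mulVec,
      ← Matrix.mulVec_mulVec x A (Q * S), ← Matrix.mulVec_mulVec x Q S,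
      ← Matrix.mulVec_mulVec y A (Q * Aᵀ), ← Matrix.mulVec_mulVec y Q Aᵀ,
      Matrix.mulVec_sub, Matrix.mulVec_sub, smul_sub]
    abel

/-! ### The key kernel property -/

lemma ker_square (hp : 0 < p) (hs : 0 < s) (hn : n = p * s) (hH : H.PosSemidef)
    (hβ : 0 < β) (hA1 : Assumption1 H A β s) (v : Fin n ⊕ Fin m → ℝ)
    (hvv : (Mexp n m p s H A β - 1) *ᵥ ((Mexp n m p s H A β - 1) *ᵥ v) = 0) :
    (Mexp n m p s H A β - 1) *ᵥ v = 0 := by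
  set Q := Qmat n m p s H A β with hQ
  set S := Smat H A β with hS
  set x : Fin n → ℝ := v ∘ Sum.inl with hx
  set y : Fin m → ℝ := v ∘ Sum.inr with hy
  have hv : Sum.elim x y = v := Sum.elim_comp_inl_inr v
  rw [← hv] at hvv ⊢
  set u : Fin n → ℝ := S *ᵥ x - Aᵀ *ᵥ y with hu
  rw [Nmul] at hvv
  set x' : Fin n → ℝ := -(Q *ᵥ u) with hx'
  set y' : Fin m → ℝ := β • (A *ᵥ (Q *ᵥ u)) - β • (A *ᵥ x) with hy'
  rw [Nmul] at hvv
  have h1 : -(Q *ᵥ (S *ᵥ x' - Aᵀ *ᵥ y')) = 0 :=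
    funext fun a => congrFun hvv (Sum.inl a)
  rw [neg_eq_zero] at h1
  have h2 : β • (A *ᵥ (Q *ᵥ (S *ᵥ x' - Aᵀ *ᵥ y'))) - β • (A *ᵥ x') = 0 :=
    funext fun b => congrFun hvv (Sum.inr b)
  rw [h1, Matrix.mulVec_zero, smul_zero, zero_sub, neg_eq_zero] at h2
  have hAx' : A *ᵥ x' = 0 := by
    rcases smul_eq_zero.mp h2 with h | h
    · exact absurd h (ne_of_gt hβ)
    · exact h
  have hAQu : A *ᵥ (Q *ᵥ u) = 0 := by
    have := hAx'
    rw [hx', Matrix.mulVec_neg, neg_eq_zero] at this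
    exact this
  -- compute S x' − Aᵀ y'
  have hinner : S *ᵥ x' - Aᵀ *ᵥ y' = -(S *ᵥ (Q *ᵥ u)) + β • (Aᵀ *ᵥ (A *ᵥ x)) := by
    rw [hx', hy',
      Matrix.mulVec_sub Aᵀ (β • (A *ᵥ (Q *ᵥ u))) (β • (A *ᵥ x)),
      Matrix.mulVec_smul Aᵀ β (A *ᵥ (Q *ᵥ u)), Matrix.mulVec_smul Aᵀ β (A *ᵥ x),
      hAQu, Matrix.mulVec_zero, smul_zero, Matrix.mulVec_neg (Q *ᵥ u) S]
    abel
  have hzero : -(S *ᵥ (Q *ᵥ u)) + β • (Aᵀ *ᵥ (A *ᵥ x)) = 0 := by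
    have := Q_mulVec_zero hp hs hn hH hβ hA1 (w := S *ᵥ x' - Aᵀ *ᵥ y') h1
    rwa [hinner] at this
  have hstar : S *ᵥ (Q *ᵥ u) = β • (Aᵀ *ᵥ (A *ᵥ x)) := by
    have h := hzero
    rw [neg_add_eq_zero] at h
    exact h
  -- S (Qu) = 0
  have hSQu : S *ᵥ (Q *ᵥ u) = 0 := by
    refine S_dot_zero hH hβ ?_
    rw [hstar, dotProduct_smul, Matrix.dotProduct_mulVec,
      Matrix.vecMul_transpose, hAQu, zero_dotProduct, smul_zero]
  -- A x = 0
  have hAx : A *ᵥ x = 0 := by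
    refine AtA_zero (A := A) ?_
    have h3 : β • (Aᵀ *ᵥ (A *ᵥ x)) = 0 := by rw [← hstar, hSQu]
    rcases smul_eq_zero.mp h3 with h | h
    · exact absurd h (ne_of_gt hβ)
    · exact h
  -- u = 0
  have huQu : u ⬝ᵥ (Q *ᵥ u) = 0 := by
    rw [hu, sub_dotProduct]
    rw [mulVec_dot S x (Q *ᵥ u), Smat_sym hH, ← hS, hSQu, dotProduct_zero]
    rw [mulVec_dot Aᵀ y (Q *ᵥ u), Matrix.transpose_transpose, hAQu,
      dotProduct_zero, sub_zero]
  have hu0 : u = 0 := Q_dot_zero hp hs hn hH hβ hA1 huQu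
  rw [Nmul, ← hS, ← hQ, ← hu, hu0, Matrix.mulVec_zero, neg_zero, Matrix.mulVec_zero,
    smul_zero, hAx, smul_zero, sub_zero, elim_zero_zero]

/-! ### From the kernel property to multiplicities -/

lemma charpoly_shift {ι : Type*} [Fintype ι] [DecidableEq ι] (M : Matrix ι ι ℝ) :
    M.charpoly.rootMultiplicity 1 = (M - 1).charpoly.natTrailingDegree := by
  rw [Polynomial.rootMultiplicity_eq_natTrailingDegree]
  congr 1
  have hmap : (Matrix.charmatrix M).map (Polynomial.eval₂RingHom Polynomial.C
      (Polynomial.X + Polynomial.C (1:ℝ))) = Matrix.charmatrix (M - 1) := by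
    ext i j
    by_cases h : i = j
    · subst h
      simp only [Matrix.map_apply, Matrix.charmatrix_apply_eq, Matrix.sub_apply,
        Matrix.one_apply_eq, Polynomial.coe_eval₂RingHom, Polynomial.eval₂_sub,
        Polynomial.eval₂_X, Polynomial.eval₂_C, map_sub]
      ring
    · simp only [Matrix.map_apply, Matrix.charmatrix_apply_ne _ _ _ h, Matrix.sub_apply,
        Matrix.one_apply_ne h, Polynomial.coe_eval₂RingHom, Polynomial.eval₂_neg,
        Polynomial.eval₂_C, sub_zero]
  calc M.charpoly.comp (Polynomial.X + Polynomial.C 1)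
      = (Polynomial.eval₂RingHom Polynomial.C (Polynomial.X + Polynomial.C (1:ℝ)))
          M.charpoly := rfl
    _ = ((Polynomial.eval₂RingHom Polynomial.C
          (Polynomial.X + Polynomial.C (1:ℝ))).mapMatrix (Matrix.charmatrix M)).det := by
        rw [Matrix.charpoly, ← RingHom.map_det]
    _ = (Matrix.charmatrix (M - 1)).det := by rw [RingHom.mapMatrix_apply, hmap]
    _ = (M - 1).charpoly := rfl

lemma finrank_ker_eq_rootMultiplicity {ι : Type*} [Fintype ι] [DecidableEq ι]
    (M : Matrix ι ι ℝ)
    (hM : ∀ v, (M - 1) *ᵥ ((M - 1) *ᵥ v) = 0 → (M - 1) *ᵥ v = 0) :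
    Module.finrank ℝ (LinearMap.ker (Matrix.toLin' M - LinearMap.id)) =
      M.charpoly.rootMultiplicity 1 := by
  set φ : Module.End ℝ (ι → ℝ) := Matrix.toLin' M - LinearMap.id with hφ
  have hφN : Matrix.toLin' (M - 1) = φ := by
    rw [map_sub, Matrix.toLin'_one]
  have hker2 : LinearMap.ker (φ ^ 2) = LinearMap.ker φ := by
    refine le_antisymm (fun v hv => ?_) (fun v hv => ?_)
    · rw [LinearMap.mem_ker] at hv ⊢
      rw [pow_two, Module.End.mul_apply] at hv
      have hv' : (M - 1) *ᵥ ((M - 1) *ᵥ v) = 0 := by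
        rw [← Matrix.toLin'_apply, ← Matrix.toLin'_apply, hφN]
        exact hv
      have := hM v hv'
      rw [← hφN, Matrix.toLin'_apply]
      exact this
    · rw [LinearMap.mem_ker] at hv ⊢
      rw [pow_two, Module.End.mul_apply, hv, map_zero]
  have h12 : LinearMap.ker (φ ^ 1) = LinearMap.ker (φ ^ Nat.succ 1) := by
    rw [pow_one, ← hker2]
  have hconst : ∀ k : ℕ, LinearMap.ker (φ ^ 1) = LinearMap.ker (φ ^ (1 + k)) :=
    fun k => Module.End.ker_pow_constant h12 k
  have hmax : φ.maxGenEigenspace 0 = LinearMap.ker φ := by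
    rw [← Module.End.iSup_genEigenspace_eq]
    apply le_antisymm
    · refine iSup_le fun k => ?_
      rw [Module.End.genEigenspace_nat]
      simp only [zero_smul, sub_zero]
      cases k with
      | zero =>
        rw [pow_zero]
        intro z hz
        rw [LinearMap.mem_ker] at hz ⊢
        rw [Module.End.one_apply] at hz
        rw [hz, map_zero]
      | succ k =>
        rw [Nat.add_comm k 1, ← hconst k, pow_one]
    · refine le_iSup_of_le 1 ?_
      rw [show ((1:ℕ) : ℕ∞) = ((1:ℕ) : ℕ∞) from rfl, Module.End.genEigenspace_nat]
      simp only [zero_smul, sub_zero, pow_one]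
      exact le_rfl
  have hdim := LinearMap.finrank_maxGenEigenspace_zero_eq φ
  rw [hmax] at hdim
  have hcp : φ.charpoly = (M - 1).charpoly := by
    rw [← hφN, ← LinearMap.charpoly_toMatrix (Matrix.toLin' (M - 1)) (Pi.basisFun ℝ ι),
      LinearMap.toMatrix_eq_toMatrix', LinearMap.toMatrix'_toLin']
  rw [hφ] at hdim
  rw [hdim, hcp, charpoly_shift]

end RACAux

end AuxRACProof


/-- Under Assumption 1 and the eigenvalue bound on `QS`, if `1` is an
eigenvalue of the expected mapping matrix `M`, then its geometric multiplicity (the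
dimension of the eigenspace for `1`) equals its algebraic multiplicity (its multiplicity
as a root of the characteristic polynomial). -/
theorem eigenvalue_one_complete_eigenvectors
    (n m p s : ℕ) (hp : 0 < p) (hs : 0 < s) (hn : n = p * s)
    (H : Matrix (Fin n) (Fin n) ℝ) (hH : H.PosSemidef)
    (A : Matrix (Fin m) (Fin n) ℝ) (β : ℝ) (hβ : 0 < β)
    (hA1 : Assumption1 H A β s)
    (hQS : ∀ lam : ℂ,
      HasEigen (((Qmat n m p s H A β * Smat H A β).map Complex.ofReal)) lam →
      lam.im = 0 ∧ 0 ≤ lam.re ∧ lam.re < 4 / 3)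
    (hone : HasEigenR (Mexp n m p s H A β) 1) :
    Module.finrank ℝ
        (LinearMap.ker (Matrix.toLin' (Mexp n m p s H A β) - LinearMap.id)) =
      (Mexp n m p s H A β).charpoly.rootMultiplicity 1 := by
  refine RACAux.finrank_ker_eq_rootMultiplicity (Mexp n m p s H A β) ?_
  exact fun v hv => RACAux.ker_square hp hs hn hH hβ hA1 v hv
end
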